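/- arXiv:1404.5671 — 3 statements merged into one kernel-verified Lean document; each statement's English description precedes it below -/
import Mathlib

section
/- Assume E_X[X⁴] < +∞. Then for arbitrary ε₁, ε₂ > 0, as n, m_n → +∞, P_w( P_{X|w}( |S²_{m_n,n} − S_n²| > ε₁ ) > ε₂ ) = O(n/m_n²); that is, there exist a constant K > 0 and an index N such that for all n ≥ N, P_w( P_{X|w}( |S²_{m_n,n} − S_n²| > ε₁ ) > ε₂ ) ≤ K · n/m_n². -/
open MeasureTheory ProbabilityTheory Filter

/-- The standard normal distribution function Φ. -/
noncomputable def Phi (t : ℝ) : ℝ := ((gaussianReal 0 1) (Set.Iic t)).toReal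

/-- `(w 1, …, w n)` has the multinomial distribution of size `m` with equal
probabilities `1/n` under `Pw`. -/
def IsUnifMultinomial {Ωw : Type} [MeasurableSpace Ωw] (Pw : Measure Ωw)
    (n m : ℕ) (w : Fin n → Ωw → ℕ) : Prop :=
  (∀ i, Measurable (w i)) ∧
  ∀ k : Fin n → ℕ,
    (Pw {ω | ∀ i, w i ω = k i}).toReal =
      if ∑ i, k i = m then
        (Nat.factorial m : ℝ) / (∏ i, (Nat.factorial (k i) : ℝ)) * (1 / n) ^ m
      else 0

/-- Sample mean X̄_n. -/
noncomputable def sampleMean {Ωx : Type} (X : ℕ → Ωx → ℝ) (n : ℕ) (ωx : Ωx) : ℝ :=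
  (∑ i : Fin n, X i ωx) / n

/-- Sample variance S_n². -/
noncomputable def sampleVar {Ωx : Type} (X : ℕ → Ωx → ℝ) (n : ℕ) (ωx : Ωx) : ℝ :=
  (∑ i : Fin n, (X i ωx - sampleMean X n ωx) ^ 2) / n

/-- Randomized sample mean X̄_{m,n}, for a realization `k` of the multinomial weights. -/
noncomputable def randMean {Ωx : Type} (X : ℕ → Ωx → ℝ) (n m : ℕ)
    (k : Fin n → ℕ) (ωx : Ωx) : ℝ :=
  (∑ i : Fin n, (k i : ℝ) * X i ωx) / m

/-- Randomized sample variance S²_{m,n}. -/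
noncomputable def randVar {Ωx : Type} (X : ℕ → Ωx → ℝ) (n m : ℕ)
    (k : Fin n → ℕ) (ωx : Ωx) : ℝ :=
  (∑ i : Fin n, (k i : ℝ) * (X i ωx - randMean X n m k ωx) ^ 2) / m

/-- √(Σ_j (k_j/m − 1/n)²). -/
noncomputable def weightNorm (n m : ℕ) (k : Fin n → ℕ) : ℝ :=
  Real.sqrt (∑ j : Fin n, ((k j : ℝ) / m - 1 / n) ^ 2)

/-- The randomized pivot G^{(1)}_{m,n} (given the weight realization `k`). -/
noncomputable def G1 {Ωx : Type} (X : ℕ → Ωx → ℝ) (μ : ℝ) (n m : ℕ)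
    (k : Fin n → ℕ) (ωx : Ωx) : ℝ :=
  (∑ i : Fin n, |(k i : ℝ) / m - 1 / n| * (X i ωx - μ)) /
    (Real.sqrt (sampleVar X n ωx) * weightNorm n m k)

/-- The randomized pivot T^{(1)}_{m,n}. -/
noncomputable def T1 {Ωx : Type} (X : ℕ → Ωx → ℝ) (n m : ℕ)
    (k : Fin n → ℕ) (ωx : Ωx) : ℝ :=
  (∑ i : Fin n, ((k i : ℝ) / m - 1 / n) * X i ωx) /
    (Real.sqrt (sampleVar X n ωx) * weightNorm n m k)

/-- The randomized pivot G^{(2)}_{m,n}. -/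
noncomputable def G2 {Ωx : Type} (X : ℕ → Ωx → ℝ) (μ : ℝ) (n m : ℕ)
    (k : Fin n → ℕ) (ωx : Ωx) : ℝ :=
  (∑ i : Fin n, |(k i : ℝ) / m - 1 / n| * (X i ωx - μ)) /
    (Real.sqrt (randVar X n m k ωx) * weightNorm n m k)

/-- The randomized pivot T^{(2)}_{m,n}. -/
noncomputable def T2 {Ωx : Type} (X : ℕ → Ωx → ℝ) (n m : ℕ)
    (k : Fin n → ℕ) (ωx : Ωx) : ℝ :=
  (∑ i : Fin n, ((k i : ℝ) / m - 1 / n) * X i ωx) /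
    (Real.sqrt (randVar X n m k ωx) * weightNorm n m k)


lemma castDesc (m r : ℕ) :
    ((m.descFactorial r : ℕ) : ℝ) = ∏ i ∈ Finset.range r, ((m : ℝ) - i) := by
  rcases le_or_gt r m with h | h
  · rw [Nat.descFactorial_eq_prod_range]
    push_cast
    refine Finset.prod_congr rfl fun i hi => ?_
    rw [Finset.mem_range] at hi
    rw [Nat.cast_sub (le_trans (le_of_lt hi) h)]
  · rw [Nat.descFactorial_eq_zero_iff_lt.2 h, Nat.cast_zero]
    refine (Finset.prod_eq_zero (Finset.mem_range.2 h) ?_).symm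
    simp

lemma castDescFact {r m : ℕ} (h : r ≤ m) :
    ((m.descFactorial r : ℕ) : ℝ) = (m.factorial : ℝ) / ((m - r).factorial : ℝ) := by
  have := Nat.factorial_mul_descFactorial h
  field_simp
  rw [mul_comm]
  exact_mod_cast this

lemma multinomial_cast {n : ℕ} (k : Fin n → ℕ) :
    (Nat.multinomial Finset.univ k : ℝ)
      = (((∑ i, k i).factorial : ℕ) : ℝ) / ∏ i, ((k i).factorial : ℝ) := by
  have h := Nat.multinomial_spec (Finset.univ : Finset (Fin n)) k
  have hpos : (0:ℝ) < ∏ i, ((k i).factorial : ℝ) :=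
    Finset.prod_pos fun i _ => by exact_mod_cast (k i).factorial_pos
  field_simp
  rw [mul_comm]
  exact_mod_cast congrArg (Nat.cast : ℕ → ℝ) h

lemma FM {n : ℕ} (hn : 0 < n) (m : ℕ) (r : Fin n → ℕ) :
    ∑ k ∈ Finset.piAntidiag Finset.univ m,
      (Nat.multinomial Finset.univ k : ℝ) * ((1:ℝ)/n)^m
        * ∏ i, ((k i).descFactorial (r i) : ℝ)
    = (m.descFactorial (∑ i, r i) : ℝ) * ((1:ℝ)/n)^(∑ i, r i) := by
  classical
  set R := ∑ i, r i with hR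
  rcases le_or_gt R m with hRm | hRm
  · -- main case
    have h0 : ∀ k ∈ Finset.piAntidiag (Finset.univ : Finset (Fin n)) m,
        (Nat.multinomial Finset.univ k : ℝ) * ((1:ℝ)/n)^m
          * ∏ i, ((k i).descFactorial (r i) : ℝ) ≠ 0 → ∀ i, r i ≤ k i := by
      intro k _ hne i
      by_contra hlt
      push_neg at hlt
      exact hne (by
        rw [mul_eq_zero]
        right
        exact Finset.prod_eq_zero (Finset.mem_univ i)
          (by rw [Nat.descFactorial_eq_zero_iff_lt.2 hlt]; norm_num))
    rw [← Finset.sum_filter_of_ne h0]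
    have key : ∑ k ∈ (Finset.piAntidiag (Finset.univ : Finset (Fin n)) m).filter
          (fun k => ∀ i, r i ≤ k i),
        (Nat.multinomial Finset.univ k : ℝ) * ((1:ℝ)/n)^m
          * ∏ i, ((k i).descFactorial (r i) : ℝ)
        = ∑ l ∈ Finset.piAntidiag (Finset.univ : Finset (Fin n)) (m - R),
            (Nat.multinomial Finset.univ l : ℝ) * ((1:ℝ)/n)^m
              * (m.descFactorial R : ℝ) := by
      refine Finset.sum_nbij' (fun k => fun j => k j - r j) (fun l => fun j => l j + r j)
        ?_ ?_ ?_ ?_ ?_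
      · intro k hk
        simp only [Finset.mem_filter, Finset.mem_piAntidiag] at hk
        obtain ⟨⟨hsum, -⟩, hge⟩ := hk
        simp only [Finset.mem_piAntidiag]
        have hsum' : ∑ j, k j = m := hsum
        constructor
        · have h1 : ∑ j, (k j - r j) + ∑ j, r j = ∑ j, k j := by
            rw [← Finset.sum_add_distrib]
            exact Finset.sum_congr rfl fun j _ => Nat.sub_add_cancel (hge j)
          omega
        · intro i _; exact Finset.mem_univ i
      · intro l hl
        simp only [Finset.mem_piAntidiag] at hl
        obtain ⟨hsum, -⟩ := hl
        simp only [Finset.mem_filter, Finset.mem_piAntidiag]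
        have hsum' : ∑ j, l j = m - R := hsum
        refine ⟨⟨?_, fun i _ => Finset.mem_univ i⟩, fun i => Nat.le_add_left _ _⟩
        rw [Finset.sum_add_distrib]
        omega
      · intro k hk
        simp only [Finset.mem_filter] at hk
        funext j
        exact Nat.sub_add_cancel (hk.2 j)
      · intro l _
        funext j
        show l j + r j - r j = l j
        omega
      · intro k hk
        simp only [Finset.mem_filter, Finset.mem_piAntidiag] at hk
        obtain ⟨⟨hsum, -⟩, hge⟩ := hk
        have hsub : ∑ j, (k j - r j) = m - R := by
          have hsum' : ∑ j, k j = m := hsum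
          have h1 : ∑ j, (k j - r j) + ∑ j, r j = ∑ j, k j := by
            rw [← Finset.sum_add_distrib]
            exact Finset.sum_congr rfl fun j _ => Nat.sub_add_cancel (hge j)
          omega
        -- value identity
        have e1 : (Nat.multinomial Finset.univ k : ℝ)
            = (m.factorial : ℝ) / ∏ i, ((k i).factorial : ℝ) := by
          rw [multinomial_cast, hsum]
        have e2 : (Nat.multinomial Finset.univ (fun j => k j - r j) : ℝ)
            = ((m - R).factorial : ℝ) / ∏ i, ((k i - r i).factorial : ℝ) := by
          rw [multinomial_cast, hsub]
        have e3 : ∀ i : Fin n, (((k i).descFactorial (r i) : ℕ) : ℝ)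
            = ((k i).factorial : ℝ) / ((k i - r i).factorial : ℝ) :=
          fun i => castDescFact (hge i)
        have e4 : ((m.descFactorial R : ℕ) : ℝ)
            = (m.factorial : ℝ) / ((m - R).factorial : ℝ) := castDescFact hRm
        rw [e1, e2, e4]
        rw [Finset.prod_congr rfl (fun i _ => e3 i), Finset.prod_div_distrib]
        have hk0 : (∏ i, ((k i).factorial : ℝ)) ≠ 0 :=
          ne_of_gt (Finset.prod_pos fun i _ => by exact_mod_cast (k i).factorial_pos)
        have hkr0 : (∏ i, ((k i - r i).factorial : ℝ)) ≠ 0 :=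
          ne_of_gt (Finset.prod_pos fun i _ => by exact_mod_cast (k i - r i).factorial_pos)
        have hm0 : ((m - R).factorial : ℝ) ≠ 0 := by exact_mod_cast (m - R).factorial_ne_zero
        field_simp
    rw [key]
    rw [← Finset.sum_mul, ← Finset.sum_mul]
    have hmt : ∑ l ∈ Finset.piAntidiag (Finset.univ : Finset (Fin n)) (m - R),
        (Nat.multinomial Finset.univ l : ℝ) = (n : ℝ) ^ (m - R) := by
      have := Finset.sum_pow_eq_sum_piAntidiag (Finset.univ : Finset (Fin n))
        (fun _ => (1:ℝ)) (m - R)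
      simp only [one_pow, Finset.prod_const_one, mul_one, Finset.sum_const,
        Finset.card_univ, Fintype.card_fin, nsmul_eq_mul, Nat.cast_id] at this
      rw [← this]
    rw [hmt]
    have hnne : (n : ℝ) ≠ 0 := by positivity
    have hpow : ((1:ℝ)/n)^m = ((1:ℝ)/n)^R * ((1:ℝ)/n)^(m - R) := by
      rw [← pow_add, Nat.add_sub_cancel' hRm]
    rw [hpow]
    field_simp
    rw [← mul_pow, mul_one_div_cancel hnne, one_pow, one_mul]
  · -- degenerate case R > m
    have hz : ((m.descFactorial R : ℕ) : ℝ) = 0 := by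
      rw [Nat.descFactorial_eq_zero_iff_lt.2 hRm]; norm_num
    rw [hz, zero_mul]
    apply Finset.sum_eq_zero
    intro k hk
    simp only [Finset.mem_piAntidiag] at hk
    obtain ⟨hsum, -⟩ := hk
    have hsum' : ∑ i, k i = m := hsum
    have : ∃ i, k i < r i := by
      by_contra h
      push_neg at h
      have : R ≤ ∑ i, k i := Finset.sum_le_sum fun i _ => h i
      omega
    obtain ⟨i, hi⟩ := this
    rw [mul_eq_zero]
    right
    exact Finset.prod_eq_zero (Finset.mem_univ i)
      (by rw [Nat.descFactorial_eq_zero_iff_lt.2 hi]; norm_num)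

lemma FM0 {n : ℕ} (hn : 0 < n) (m : ℕ) :
    ∑ k ∈ Finset.piAntidiag (Finset.univ : Finset (Fin n)) m,
      (Nat.multinomial Finset.univ k : ℝ) * ((1:ℝ)/n)^m = 1 := by
  have := FM hn m (fun _ => 0)
  simpa using this

lemma FM1 {n : ℕ} (hn : 0 < n) (m : ℕ) (i : Fin n) (a : ℕ) :
    ∑ k ∈ Finset.piAntidiag (Finset.univ : Finset (Fin n)) m,
      (Nat.multinomial Finset.univ k : ℝ) * ((1:ℝ)/n)^m * ((k i).descFactorial a : ℝ)
    = (m.descFactorial a : ℝ) * ((1:ℝ)/n)^a := by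
  classical
  have h := FM hn m (fun l => if l = i then a else 0)
  have hs : (∑ l, if l = i then a else 0) = a := by
    rw [Finset.sum_ite_eq' Finset.univ i (fun _ => a)]
    simp
  rw [hs] at h
  rw [← h]
  refine Finset.sum_congr rfl fun k _ => ?_
  congr 1
  rw [show (((k i).descFactorial a : ℕ) : ℝ)
      = (((k i).descFactorial (if i = i then a else 0) : ℕ) : ℝ) by rw [if_pos rfl]]
  refine (Finset.prod_eq_single
    (f := fun l => (((k l).descFactorial (if l = i then a else 0) : ℕ) : ℝ)) i
    (fun j _ hj => ?_) (fun h => absurd (Finset.mem_univ i) h)).symm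
  simp only [if_neg hj]
  simp

lemma FM2 {n : ℕ} (hn : 0 < n) (m : ℕ) {i j : Fin n} (hij : i ≠ j) (a b : ℕ) :
    ∑ k ∈ Finset.piAntidiag (Finset.univ : Finset (Fin n)) m,
      (Nat.multinomial Finset.univ k : ℝ) * ((1:ℝ)/n)^m
        * (((k i).descFactorial a : ℝ) * ((k j).descFactorial b : ℝ))
    = (m.descFactorial (a+b) : ℝ) * ((1:ℝ)/n)^(a+b) := by
  classical
  set r : Fin n → ℕ := fun l => if l = i then a else if l = j then b else 0 with hr
  have h := FM hn m r
  have hpair : ({i, j} : Finset (Fin n)) ⊆ Finset.univ := Finset.subset_univ _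
  have hs : (∑ l, r l) = a + b := by
    have hout : ∀ x ∈ (Finset.univ : Finset (Fin n)), x ∉ ({i, j} : Finset (Fin n)) →
        r x = 0 := by
      intro x _ hx
      simp only [Finset.mem_insert, Finset.mem_singleton] at hx
      push_neg at hx
      simp [hr, hx.1, hx.2]
    rw [← Finset.sum_subset hpair hout, Finset.sum_pair hij]
    simp [hr, hij, Ne.symm hij]
  rw [hs] at h
  rw [← h]
  refine Finset.sum_congr rfl fun k _ => ?_
  congr 1
  have hout : ∀ x ∈ (Finset.univ : Finset (Fin n)), x ∉ ({i, j} : Finset (Fin n)) →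
      (((k x).descFactorial (r x) : ℕ) : ℝ) = 1 := by
    intro x _ hx
    simp only [Finset.mem_insert, Finset.mem_singleton] at hx
    push_neg at hx
    simp [hr, hx.1, hx.2]
  rw [← Finset.prod_subset hpair hout, Finset.prod_pair hij]
  simp [hr, hij, Ne.symm hij]

lemma sq_cast_eq (x : ℕ) : ((x:ℝ))^2 = ((x.descFactorial 2 : ℕ) : ℝ) + x := by
  rw [castDesc]
  simp [Finset.prod_range_succ]
  ring

lemma descIdent (x : ℕ) : (((x.descFactorial 2 : ℕ)):ℝ)^2
    = ((x.descFactorial 4 : ℕ):ℝ) + 4*((x.descFactorial 3 : ℕ):ℝ)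
      + 2*((x.descFactorial 2 : ℕ):ℝ) := by
  rw [castDesc, castDesc, castDesc]
  simp [Finset.prod_range_succ]
  ring

lemma descCast2 (m : ℕ) : ((m.descFactorial 2 : ℕ):ℝ) = (m:ℝ)*((m:ℝ)-1) := by
  rw [castDesc]; simp [Finset.prod_range_succ]

lemma descCast3 (m : ℕ) : ((m.descFactorial 3 : ℕ):ℝ) = (m:ℝ)*((m:ℝ)-1)*((m:ℝ)-2) := by
  rw [castDesc]; simp [Finset.prod_range_succ]; try ring

lemma descCast4 (m : ℕ) :
    ((m.descFactorial 4 : ℕ):ℝ) = (m:ℝ)*((m:ℝ)-1)*((m:ℝ)-2)*((m:ℝ)-3) := by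
  rw [castDesc]; simp [Finset.prod_range_succ]; try ring

lemma sumPA2 {n m : ℕ} (hn : 0 < n) (hm : 0 < m) :
    ∑ k ∈ Finset.piAntidiag (Finset.univ : Finset (Fin n)) m,
      (Nat.multinomial Finset.univ k : ℝ) * ((1:ℝ)/n)^m
        * (∑ j, ((k j : ℝ)/m - 1/n)^2)^2
    ≤ (n:ℝ) / (m:ℝ)^2 := by
  classical
  have hN : (1:ℝ) ≤ n := by exact_mod_cast hn
  have hM : (1:ℝ) ≤ m := by exact_mod_cast hm
  have hN0 : (n:ℝ) ≠ 0 := by linarith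
  have hM0 : (m:ℝ) ≠ 0 := by linarith
  set N := (n:ℝ)
  set M := (m:ℝ)
  set D2 := ((m.descFactorial 2 : ℕ):ℝ)
  set D3 := ((m.descFactorial 3 : ℕ):ℝ)
  set D4 := ((m.descFactorial 4 : ℕ):ℝ)
  set p : (Fin n → ℕ) → ℝ :=
    fun k => (Nat.multinomial Finset.univ k : ℝ) * ((1:ℝ)/n)^m with hp
  set B : (Fin n → ℕ) → ℝ := fun k => ∑ j, (((k j).descFactorial 2 : ℕ):ℝ) with hB
  set c0 : ℝ := 1/M - 1/N with hc0
  -- Step A : rewrite the quadratic form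
  have stepA : ∀ k ∈ Finset.piAntidiag (Finset.univ : Finset (Fin n)) m,
      (∑ j, ((k j : ℝ)/M - 1/N)^2) = B k * (1/M^2) + c0 := by
    intro k hk
    simp only [Finset.mem_piAntidiag] at hk
    have hk1 : ∑ x, k x = m := hk.1
    have hsumc : ∑ j, ((k j : ℝ)) = M := by
      show (∑ j, ((k j : ℝ))) = ((m:ℕ):ℝ)
      exact_mod_cast hk1
    have hterm : ∀ j : Fin n, ((k j : ℝ)/M - 1/N)^2
        = (((k j).descFactorial 2 : ℕ):ℝ) * (1/M^2)
          + ((k j : ℝ)) * (1/M^2 - 2/(M*N)) + 1/N^2 := by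
      intro j
      linear_combination (1/(M^2)) * sq_cast_eq (k j)
    rw [Finset.sum_congr rfl fun j _ => hterm j]
    rw [Finset.sum_add_distrib, Finset.sum_add_distrib, ← Finset.sum_mul, ← Finset.sum_mul,
      hsumc, Finset.sum_const, Finset.card_univ, Fintype.card_fin, nsmul_eq_mul]
    have hBk : B k = ∑ j, (((k j).descFactorial 2 : ℕ):ℝ) := rfl
    have hNn : ((n:ℕ):ℝ) = N := rfl
    rw [hBk, hc0, hNn]
    have h1 : M * (1/M^2 - 2/(M*N)) + N * (1/N^2) = 1/M - 1/N := by
      field_simp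
      ring
    linarith [h1]
  -- moments
  have L1 : ∑ k ∈ Finset.piAntidiag (Finset.univ : Finset (Fin n)) m,
      p k * B k = N * (D2 * (1/N)^2) := by
    simp only [hp, hB, Finset.mul_sum]
    rw [Finset.sum_comm]
    rw [Finset.sum_congr rfl fun j _ => FM1 hn m j 2]
    rw [Finset.sum_const, Finset.card_univ, Fintype.card_fin, nsmul_eq_mul]
  have L0 : ∑ k ∈ Finset.piAntidiag (Finset.univ : Finset (Fin n)) m, p k = 1 := FM0 hn m
  set F4 : ℝ := D4 * (1/N)^4 with hF4
  set E4 : ℝ := D4 * (1/N)^4 + 4*(D3 * (1/N)^3) + 2*(D2 * (1/N)^2) with hE4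
  have inner : ∀ i j : Fin n,
      ∑ k ∈ Finset.piAntidiag (Finset.univ : Finset (Fin n)) m,
        p k * ((((k i).descFactorial 2 : ℕ):ℝ) * (((k j).descFactorial 2 : ℕ):ℝ))
      = if i = j then E4 else F4 := by
    intro i j
    rcases eq_or_ne i j with rfl | hij
    · rw [if_pos rfl]
      have : ∀ k : Fin n → ℕ,
          p k * ((((k i).descFactorial 2 : ℕ):ℝ) * (((k i).descFactorial 2 : ℕ):ℝ))
          = p k * (((k i).descFactorial 4 : ℕ):ℝ)
            + 4*(p k * (((k i).descFactorial 3 : ℕ):ℝ))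
            + 2*(p k * (((k i).descFactorial 2 : ℕ):ℝ)) := by
        intro k
        linear_combination (p k) * descIdent (k i)
      rw [Finset.sum_congr rfl fun k _ => this k]
      rw [Finset.sum_add_distrib, Finset.sum_add_distrib, ← Finset.mul_sum, ← Finset.mul_sum]
      rw [hE4]
      simp only [hp]
      rw [FM1 hn m i 4, FM1 hn m i 3, FM1 hn m i 2]
    · rw [if_neg hij]
      simp only [hp]
      rw [FM2 hn m hij 2 2, hF4]
  have L2 : ∑ k ∈ Finset.piAntidiag (Finset.univ : Finset (Fin n)) m,
      p k * (B k)^2 = N * (N*F4 + E4 - F4) := by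
    have expand : ∀ k : Fin n → ℕ, p k * (B k)^2
        = ∑ i, ∑ j, p k * ((((k i).descFactorial 2 : ℕ):ℝ) * (((k j).descFactorial 2 : ℕ):ℝ)) := by
      intro k
      rw [hB, sq, Finset.sum_mul_sum]
      rw [Finset.mul_sum]
      refine Finset.sum_congr rfl fun i _ => ?_
      rw [Finset.mul_sum]
    rw [Finset.sum_congr rfl fun k _ => expand k]
    rw [Finset.sum_comm]
    rw [Finset.sum_congr rfl fun i _ => Finset.sum_comm]
    rw [Finset.sum_congr rfl fun i _ => Finset.sum_congr rfl fun j _ => inner i j]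
    have row : ∀ i : Fin n, ∑ j, (if i = j then E4 else F4) = N * F4 + (E4 - F4) := by
      intro i
      have : ∀ j : Fin n, (if i = j then E4 else F4)
          = F4 + (if i = j then E4 - F4 else 0) := by
        intro j; split_ifs <;> ring
      rw [Finset.sum_congr rfl fun j _ => this j, Finset.sum_add_distrib,
        Finset.sum_const, Finset.card_univ, Fintype.card_fin, nsmul_eq_mul,
        Finset.sum_ite_eq Finset.univ i (fun _ => E4 - F4)]
      simp
      left; rfl
    rw [Finset.sum_congr rfl fun i _ => row i, Finset.sum_const, Finset.card_univ,
      Fintype.card_fin, nsmul_eq_mul]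
    show N * (N * F4 + (E4 - F4)) = N * (N * F4 + E4 - F4)
    ring
  -- assemble
  have assemble : ∑ k ∈ Finset.piAntidiag (Finset.univ : Finset (Fin n)) m,
      p k * (∑ j, ((k j : ℝ)/M - 1/N)^2)^2
      = (N * (N*F4 + E4 - F4)) * (1/M^4) + (N * (D2 * (1/N)^2)) * (2*c0/M^2) + c0^2 := by
    rw [Finset.sum_congr rfl fun k hk => by rw [stepA k hk]]
    have expand2 : ∀ k : Fin n → ℕ, p k * (B k * (1/M^2) + c0)^2
        = (p k * (B k)^2) * (1/M^4) + (p k * B k) * (2*c0/M^2) + p k * c0^2 := by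
      intro k; field_simp; ring
    rw [Finset.sum_congr rfl fun k _ => expand2 k]
    rw [Finset.sum_add_distrib, Finset.sum_add_distrib, ← Finset.sum_mul, ← Finset.sum_mul,
      ← Finset.sum_mul, L1, L2, L0]
    ring
  have conv1 : (∑ k ∈ Finset.piAntidiag (Finset.univ : Finset (Fin n)) m,
      (Nat.multinomial Finset.univ k : ℝ) * ((1:ℝ)/(n:ℝ))^m
        * (∑ j, ((k j : ℝ)/(m:ℝ) - 1/(n:ℝ))^2)^2)
      = ∑ k ∈ Finset.piAntidiag (Finset.univ : Finset (Fin n)) m,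
          p k * (∑ j, ((k j : ℝ)/M - 1/N)^2)^2 :=
    Finset.sum_congr rfl fun k _ => rfl
  rw [conv1, assemble]
  -- final polynomial inequality
  have hD2 : D2 = M*(M-1) := descCast2 m
  have hD3 : D3 = M*(M-1)*(M-2) := descCast3 m
  have hD4 : D4 = M*(M-1)*(M-2)*(M-3) := descCast4 m
  have key : N/M^2 - ((N * (N*F4 + E4 - F4)) * (1/M^4) + (N * (D2 * (1/N)^2)) * (2*c0/M^2) + c0^2)
      = (N^3*M^2*(N-1) + N*M*(M + 2*N - 2)) / (N^3*M^4) := by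
    rw [hF4, hE4, hD2, hD3, hD4, hc0]
    field_simp
    ring
  have hnum : (0:ℝ) ≤ N^3*M^2*(N-1) + N*M*(M + 2*N - 2) := by
    have t1 : (0:ℝ) ≤ N^3*M^2*(N-1) := mul_nonneg (by positivity) (by linarith)
    have t2 : (0:ℝ) ≤ N*M*(M + 2*N - 2) := mul_nonneg (by positivity) (by linarith)
    linarith
  have hden : (0:ℝ) < N^3*M^4 := by positivity
  have := div_nonneg hnum (le_of_lt hden)
  linarith [key ▸ this]

lemma pow4_bound (a b : ℝ) : (a - b)^4 ≤ 8*a^4 + 8*b^4 := by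
  nlinarith [sq_nonneg (a+b), sq_nonneg (a-b), sq_nonneg (a^2-b^2), sq_nonneg (a^2+b^2),
    sq_nonneg ((a-b)^2), sq_nonneg (a*b), sq_nonneg (a^2 - a*b), sq_nonneg (a^2+a*b)]

lemma wvar_eq {n : ℕ} (c x : Fin n → ℝ) (hc : ∑ i, c i = 1) (μ : ℝ) :
    ∑ i, c i * (x i - ∑ j, c j * x j)^2
      = ∑ i, c i * (x i - μ)^2 - (∑ i, c i * (x i - μ))^2 := by
  have key : ∑ j, c j * x j = μ + ∑ j, c j * (x j - μ) := by
    have h1 : ∀ j ∈ (Finset.univ : Finset (Fin n)),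
        c j * (x j - μ) = c j * x j - c j * μ := fun j _ => by ring
    rw [Finset.sum_congr rfl h1, Finset.sum_sub_distrib, ← Finset.sum_mul, hc]
    ring
  set r := ∑ j, c j * (x j - μ) with hr
  rw [key]
  have h2 : ∀ i ∈ (Finset.univ : Finset (Fin n)),
      c i * (x i - (μ + r))^2
        = (c i * (x i - μ)^2 - 2*r*(c i * (x i - μ))) + c i * r^2 := fun i _ => by ring
  rw [Finset.sum_congr rfl h2, Finset.sum_add_distrib, Finset.sum_sub_distrib,
    ← Finset.mul_sum, ← Finset.sum_mul, hc, ← hr]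
  ring

lemma cheb {Ωx : Type} [MeasurableSpace Ωx] {Px : Measure Ωx} [IsProbabilityMeasure Px]
    {n : ℕ} (V : Fin n → Ωx → ℝ)
    (hL2 : ∀ i, MemLp (V i) 2 Px)
    (hind : Set.Pairwise ↑(Finset.univ : Finset (Fin n))
      fun i j => IndepFun (V i) (V j) Px)
    {c : ℝ} (hc : 0 < c) :
    Px {ω | c ≤ |(∑ i, V i) ω - ∫ ω', (∑ i, V i) ω' ∂Px|}
      ≤ ENNReal.ofReal ((∑ i, variance (V i) Px) / c^2) := by
  have hmem : MemLp (∑ i, V i) 2 Px := memLp_finset_sum' Finset.univ fun i _ => hL2 i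
  have hvar := IndepFun.variance_sum (μ := Px) (fun i _ => hL2 i) hind
  have := meas_ge_le_variance_div_sq (μ := Px) hmem hc
  rwa [hvar] at this

lemma cheb_comp {Ωx : Type} [MeasurableSpace Ωx] {Px : Measure Ωx} [IsProbabilityMeasure Px]
    {n : ℕ} (X : ℕ → Ωx → ℝ)
    (hXindep : iIndepFun X Px)
    (g : ℝ → ℝ) (hg : Measurable g) (e : Fin n → ℝ)
    (hL2 : ∀ i : Fin n, MemLp (fun ω => g (X i ω)) 2 Px)
    {c : ℝ} (hc : 0 < c) :
    Px {ω | c ≤ |(∑ i : Fin n, fun ω' => e i * g (X i ω')) ω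
        - ∫ ω', (∑ i : Fin n, fun ω'' => e i * g (X i ω'')) ω' ∂Px|}
      ≤ ENNReal.ofReal
          ((∑ i : Fin n, (e i)^2 * variance (fun ω => g (X (i:ℕ) ω)) Px) / c^2) := by
  have hvs : ∀ i : Fin n, variance (fun ω => e i * g (X (i:ℕ) ω)) Px
      = (e i)^2 * variance (fun ω => g (X (i:ℕ) ω)) Px := by
    intro i
    rw [show (fun ω => e i * g (X (i:ℕ) ω)) = e i • (fun ω => g (X (i:ℕ) ω)) from rfl]
    exact variance_smul _ _ _
  have h := cheb (Px := Px) (fun i : Fin n => fun ω => e i * g (X (i:ℕ) ω))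
    (fun i => (hL2 i).const_mul (e i))
    (fun i _ j _ hij => by
      have hne : (i:ℕ) ≠ (j:ℕ) := fun hc => hij (Fin.val_injective hc)
      exact (hXindep.indepFun hne).comp (hg.const_mul (e i)) (hg.const_mul (e j)))
    hc
  rw [Finset.sum_congr rfl fun i _ => hvs i] at h
  exact h

lemma xside
    {Ωx : Type} [MeasurableSpace Ωx] (Px : Measure Ωx) [IsProbabilityMeasure Px]
    (X : ℕ → Ωx → ℝ) (hXmeas : ∀ i, Measurable (X i))
    (hXindep : iIndepFun X Px)
    (hXid : ∀ i, IdentDistrib (X i) (X 0) Px Px)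
    (μ σ2 : ℝ) (hXint : Integrable (X 0) Px) (hμ : μ = ∫ ω, X 0 ω ∂Px)
    (hVarInt : Integrable (fun ω => (X 0 ω - μ) ^ 2) Px)
    (hσ2 : σ2 = ∫ ω, (X 0 ω - μ) ^ 2 ∂Px)
    (hM4 : Integrable (fun ω => (X 0 ω) ^ 4) Px)
    (n m : ℕ) (hn : 0 < n) (hm : 0 < m)
    (k : Fin n → ℕ) (hk : ∑ i, k i = m)
    (ε1 : ℝ) (hε1 : 0 < ε1) :
    (Px {ωx | |randVar X n m k ωx - sampleVar X n ωx| > ε1}).toReal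
      ≤ 9 * (∫ ω, (X 0 ω - μ)^4 ∂Px) * (∑ j, ((k j : ℝ)/m - 1/n)^2) / ε1^2
        + 3 * σ2 * ((∑ j, ((k j : ℝ)/m - 1/n)^2) + 1/n) / ε1
        + 3 * σ2 * (1/n) / ε1 := by
  classical
  have hnR : (0:ℝ) < n := by exact_mod_cast hn
  have hmR : (0:ℝ) < m := by exact_mod_cast hm
  set V4 : ℝ := ∫ ω, (X 0 ω - μ)^4 ∂Px with hV4
  set Z : ℕ → Ωx → ℝ := fun i ω => (X i ω - μ)^2 with hZ
  set Y : ℕ → Ωx → ℝ := fun i ω => X i ω - μ with hY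
  set d : Fin n → ℝ := fun i => (k i : ℝ)/m - 1/n with hd
  set A : ℝ := ∑ j, d j ^ 2 with hA
  have hkR : ∑ i : Fin n, (k i : ℝ) = m := by exact_mod_cast hk
  have hsum_c : ∑ i : Fin n, (k i : ℝ)/m = 1 := by
    rw [← Finset.sum_div, hkR]
    field_simp
  have hsum_n : ∑ _i : Fin n, (1:ℝ)/n = 1 := by
    rw [Finset.sum_const, Finset.card_univ, Fintype.card_fin, nsmul_eq_mul]
    field_simp
  have hsum_d : ∑ i, d i = 0 := by
    simp only [hd]
    rw [Finset.sum_sub_distrib, hsum_c, hsum_n]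
    ring
  -- identical distribution and integrability facts
  have hYid : ∀ i, IdentDistrib (Y i) (Y 0) Px Px :=
    fun i => (hXid i).comp (measurable_id.sub_const μ)
  have hZid : ∀ i, IdentDistrib (Z i) (Z 0) Px Px :=
    fun i => (hXid i).comp ((measurable_id.sub_const μ).pow_const 2)
  have hY4id : ∀ i, IdentDistrib (fun ω => (X i ω - μ)^4) (fun ω => (X 0 ω - μ)^4) Px Px :=
    fun i => (hXid i).comp ((measurable_id.sub_const μ).pow_const 4)
  have hXiInt : ∀ i, Integrable (X i) Px := fun i => (hXid i).integrable_iff.2 hXint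
  have hZ0Int : Integrable (Z 0) Px := hVarInt
  have hZInt : ∀ i, Integrable (Z i) Px := fun i => (hZid i).integrable_iff.2 hZ0Int
  have hY40Int : Integrable (fun ω => (X 0 ω - μ)^4) Px := by
    refine Integrable.mono' ((hM4.const_mul 8).add (integrable_const (8*μ^4)))
      (((hXmeas 0).sub_const μ).pow_const 4).aestronglyMeasurable
      (ae_of_all _ fun ω => ?_)
    rw [Real.norm_eq_abs, abs_of_nonneg (by positivity)]
    exact pow4_bound _ _
  have hY4Int : ∀ i, Integrable (fun ω => (X i ω - μ)^4) Px :=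
    fun i => (hY4id i).integrable_iff.2 hY40Int
  have hYmeas : ∀ i, Measurable (Y i) := fun i => (hXmeas i).sub_const μ
  have hZmeas : ∀ i, Measurable (Z i) := fun i => ((hXmeas i).sub_const μ).pow_const 2
  have hMemY : ∀ i, MemLp (Y i) 2 Px := by
    intro i
    refine (memLp_two_iff_integrable_sq (hYmeas i).aestronglyMeasurable).2 ?_
    exact hZInt i
  have hMemZ : ∀ i, MemLp (Z i) 2 Px := by
    intro i
    refine (memLp_two_iff_integrable_sq (hZmeas i).aestronglyMeasurable).2 ?_
    have : (fun ω => (Z i ω)^2) = fun ω => (X i ω - μ)^4 := by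
      funext ω; simp only [hZ]; ring
    rw [this]
    exact hY4Int i
  -- means and variances
  have hEX : ∀ i, ∫ ω, X i ω ∂Px = μ := fun i => ((hXid i).integral_eq).trans hμ.symm
  have hEY : ∀ i, ∫ ω, Y i ω ∂Px = 0 := by
    intro i
    simp only [hY]
    rw [integral_sub (hXiInt i) (integrable_const μ), integral_const, hEX i]
    simp
  have hEZ : ∀ i, ∫ ω, Z i ω ∂Px = σ2 := fun i => ((hZid i).integral_eq).trans hσ2.symm
  have hσ2nonneg : 0 ≤ σ2 := hσ2 ▸ integral_nonneg fun ω => sq_nonneg _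
  have hV4nonneg : 0 ≤ V4 := integral_nonneg fun ω => by positivity
  have hAnonneg : 0 ≤ A := Finset.sum_nonneg fun j _ => sq_nonneg _
  have hVarY : ∀ i, variance (Y i) Px = σ2 := by
    intro i
    rw [variance_eq_sub (hMemY i)]
    have h1 : (Y i)^2 = Z i := by funext ω; simp [hZ, hY, sq]
    rw [h1]
    simp only [hEZ i, hEY i]
    ring
  have hVarZ : ∀ i, variance (Z i) Px ≤ V4 := by
    intro i
    have h1 := variance_le_expectation_sq (μ := Px) (hZmeas i).aestronglyMeasurable
    have h2 : ((Z i)^2 : Ωx → ℝ) = fun ω => (X i ω - μ)^4 := by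
      funext ω; simp only [Pi.pow_apply, hZ]; ring
    rw [h2] at h1
    calc variance (Z i) Px ≤ ∫ ω, (X i ω - μ)^4 ∂Px := h1
    _ = V4 := (hY4id i).integral_eq
  have hVarSmul : ∀ (c : ℝ) (f : Ωx → ℝ), variance (fun ω => c * f ω) Px
      = c^2 * variance f Px := by
    intro c f
    rw [show (fun ω => c * f ω) = c • f from rfl]
    exact variance_smul c f Px
  -- Chebyshev setup
  have hc1 : 0 < ε1/3 := by linarith
  have hc2 : 0 < Real.sqrt (ε1/3) := Real.sqrt_pos.2 hc1
  set gZ : ℝ → ℝ := fun x => (x - μ)^2 with hgZ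
  set gY : ℝ → ℝ := fun x => x - μ with hgY
  have hgZm : Measurable gZ := (measurable_id.sub_const μ).pow_const 2
  have hgYm : Measurable gY := measurable_id.sub_const μ
  have hMemZ' : ∀ i : Fin n, MemLp (fun ω => gZ (X (i:ℕ) ω)) 2 Px := fun i => hMemZ i
  have hMemY' : ∀ i : Fin n, MemLp (fun ω => gY (X (i:ℕ) ω)) 2 Px := fun i => hMemY i
  have hch1 := cheb_comp X hXindep gZ hgZm d hMemZ' hc1
  have hch2 := cheb_comp X hXindep gY hgYm (fun i => (k i : ℝ)/m) hMemY' hc2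
  have hch3 := cheb_comp X hXindep gY hgYm (fun _ : Fin n => 1/(n:ℝ)) hMemY' hc2
  -- variance sums
  have hv1 : (∑ i : Fin n, (d i)^2 * variance (fun ω => gZ (X (i:ℕ) ω)) Px) ≤ A * V4 := by
    calc ∑ i : Fin n, (d i)^2 * variance (fun ω => gZ (X (i:ℕ) ω)) Px
        ≤ ∑ i : Fin n, (d i)^2 * V4 :=
          Finset.sum_le_sum fun i _ =>
            mul_le_mul_of_nonneg_left (hVarZ i) (sq_nonneg _)
      _ = A * V4 := by rw [hA, ← Finset.sum_mul]
  have hVarYc : ∀ i : Fin n, variance (fun ω => gY (X (i:ℕ) ω)) Px = σ2 := fun i => hVarY i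
  have hsq : ∑ i : Fin n, ((k i:ℝ)/m)^2 = A + 1/n := by
    have h1 : ∀ i ∈ (Finset.univ : Finset (Fin n)),
        ((k i:ℝ)/m)^2 = d i^2 + (2/n)*d i + 1/n^2 := fun i _ => by
      simp only [hd]; ring
    rw [Finset.sum_congr rfl h1, Finset.sum_add_distrib, Finset.sum_add_distrib,
      ← Finset.mul_sum, hsum_d, Finset.sum_const, Finset.card_univ, Fintype.card_fin,
      nsmul_eq_mul, hA]
    have hnne : (n:ℝ) ≠ 0 := ne_of_gt hnR
    field_simp
    ring
  have hv2 : (∑ i : Fin n, ((k i:ℝ)/m)^2 * variance (fun ω => gY (X (i:ℕ) ω)) Px)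
      = σ2 * (A + 1/n) := by
    rw [Finset.sum_congr rfl fun i _ => by rw [hVarYc i], ← Finset.sum_mul, hsq]
    ring
  have hv3 : (∑ i : Fin n, ((1:ℝ)/n)^2 * variance (fun ω => gY (X (i:ℕ) ω)) Px)
      = σ2 * (1/n) := by
    rw [Finset.sum_congr rfl fun i _ => by rw [hVarYc i], Finset.sum_const,
      Finset.card_univ, Fintype.card_fin, nsmul_eq_mul]
    have hnne : (n:ℝ) ≠ 0 := ne_of_gt hnR
    field_simp
  -- means of the three sums
  have hEsum : ∀ (e : Fin n → ℝ) (g : ℝ → ℝ) (v : ℝ),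
      (∀ i : Fin n, Integrable (fun ω => g (X (i:ℕ) ω)) Px) →
      (∀ i : Fin n, ∫ ω, g (X (i:ℕ) ω) ∂Px = v) →
      ∫ ω', (∑ i : Fin n, fun ω'' => e i * g (X (i:ℕ) ω'')) ω' ∂Px = (∑ i, e i) * v := by
    intro e g v hGI hv
    have h1 : (fun ω' => (∑ i : Fin n, fun ω'' => e i * g (X (i:ℕ) ω'')) ω')
        = fun ω' => ∑ i : Fin n, e i * g (X (i:ℕ) ω') := by
      funext ω'; rw [Finset.sum_apply]
    rw [show (∫ ω', (∑ i : Fin n, fun ω'' => e i * g (X (i:ℕ) ω'')) ω' ∂Px)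
        = ∫ ω', ∑ i : Fin n, e i * g (X (i:ℕ) ω') ∂Px from by rw [h1]]
    rw [integral_finset_sum _ fun i _ => (hGI i).const_mul (e i)]
    have h2 : ∀ i ∈ (Finset.univ : Finset (Fin n)),
        (∫ a, e i * g (X (i:ℕ) a) ∂Px) = e i * v := fun i _ => by
      rw [integral_const_mul, hv i]
    rw [Finset.sum_congr rfl h2, ← Finset.sum_mul]
  have hEW : ∫ ω', (∑ i : Fin n, fun ω'' => d i * gZ (X (i:ℕ) ω'')) ω' ∂Px = 0 := by
    rw [hEsum d gZ σ2 (fun i => hZInt i) (fun i => hEZ i), hsum_d]; ring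
  have hEU : ∫ ω', (∑ i : Fin n, fun ω'' => ((k i:ℝ)/m) * gY (X (i:ℕ) ω'')) ω' ∂Px = 0 := by
    rw [hEsum (fun i => (k i:ℝ)/m) gY 0 (fun i => (hXiInt i).sub (integrable_const μ))
      (fun i => hEY i)]
    ring
  have hET : ∫ ω', (∑ i : Fin n, fun ω'' => (1/(n:ℝ)) * gY (X (i:ℕ) ω'')) ω' ∂Px = 0 := by
    rw [hEsum (fun _ => 1/(n:ℝ)) gY 0 (fun i => (hXiInt i).sub (integrable_const μ))
      (fun i => hEY i)]
    ring
  -- the inclusion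
  have hsub : {ωx | |randVar X n m k ωx - sampleVar X n ωx| > ε1}
      ⊆ {ω | ε1/3 ≤ |(∑ i : Fin n, fun ω' => d i * gZ (X (i:ℕ) ω')) ω
            - ∫ ω', (∑ i : Fin n, fun ω'' => d i * gZ (X (i:ℕ) ω'')) ω' ∂Px|}
        ∪ ({ω | Real.sqrt (ε1/3) ≤ |(∑ i : Fin n, fun ω' => ((k i:ℝ)/m) * gY (X (i:ℕ) ω')) ω
            - ∫ ω', (∑ i : Fin n, fun ω'' => ((k i:ℝ)/m) * gY (X (i:ℕ) ω'')) ω' ∂Px|}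
          ∪ {ω | Real.sqrt (ε1/3) ≤ |(∑ i : Fin n, fun ω' => (1/(n:ℝ)) * gY (X (i:ℕ) ω')) ω
            - ∫ ω', (∑ i : Fin n, fun ω'' => (1/(n:ℝ)) * gY (X (i:ℕ) ω'')) ω' ∂Px|}) := by
    intro ω hω
    simp only [Set.mem_setOf_eq] at hω
    by_contra hq
    simp only [Set.mem_union, Set.mem_setOf_eq, not_or, not_le] at hq
    obtain ⟨hq1, hq2, hq3⟩ := hq
    rw [hEW, sub_zero, Finset.sum_apply] at hq1
    rw [hEU, sub_zero, Finset.sum_apply] at hq2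
    rw [hET, sub_zero, Finset.sum_apply] at hq3
    set SW := ∑ i : Fin n, d i * gZ (X (i:ℕ) ω) with hSW
    set SU := ∑ i : Fin n, ((k i:ℝ)/m) * gY (X (i:ℕ) ω) with hSU
    set ST := ∑ i : Fin n, (1/(n:ℝ)) * gY (X (i:ℕ) ω) with hST
    -- identity
    have hmean : randMean X n m k ω = ∑ j : Fin n, ((k j:ℝ)/m) * X j ω := by
      unfold randMean
      rw [Finset.sum_div]
      exact Finset.sum_congr rfl fun j _ => by ring
    have hrand : randVar X n m k ω = ∑ i : Fin n, ((k i:ℝ)/m) * gZ (X (i:ℕ) ω) - SU^2 := by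
      have h0 : randVar X n m k ω
          = ∑ i : Fin n, ((k i:ℝ)/m) * (X i ω - ∑ j : Fin n, ((k j:ℝ)/m) * X j ω)^2 := by
        unfold randVar
        rw [hmean, Finset.sum_div]
        exact Finset.sum_congr rfl fun i _ => by ring
      rw [h0]
      exact wvar_eq (fun i => (k i:ℝ)/m) (fun i => X i ω) hsum_c μ
    have hsmean : sampleMean X n ω = ∑ j : Fin n, (1/(n:ℝ)) * X j ω := by
      unfold sampleMean
      rw [Finset.sum_div]
      exact Finset.sum_congr rfl fun j _ => by ring
    have hsamp : sampleVar X n ω = ∑ i : Fin n, (1/(n:ℝ)) * gZ (X (i:ℕ) ω) - ST^2 := by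
      have h0 : sampleVar X n ω
          = ∑ i : Fin n, (1/(n:ℝ)) * (X i ω - ∑ j : Fin n, (1/(n:ℝ)) * X j ω)^2 := by
        unfold sampleVar
        rw [hsmean, Finset.sum_div]
        exact Finset.sum_congr rfl fun i _ => by ring
      rw [h0]
      exact wvar_eq (fun _ => 1/(n:ℝ)) (fun i => X i ω) hsum_n μ
    have hsplit : ∑ i : Fin n, ((k i:ℝ)/m) * gZ (X (i:ℕ) ω)
        - ∑ i : Fin n, (1/(n:ℝ)) * gZ (X (i:ℕ) ω) = SW := by
      rw [hSW, ← Finset.sum_sub_distrib]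
      exact Finset.sum_congr rfl fun i _ => by simp only [hd]; ring
    have hid : randVar X n m k ω - sampleVar X n ω = SW - SU^2 + ST^2 := by
      rw [hrand, hsamp]
      rw [← hsplit]
      ring
    clear_value SW SU ST
    -- numeric contradiction
    have habs1 := abs_lt.1 hq1
    have hsq2 : SU^2 < ε1/3 := by
      calc SU^2 = |SU|^2 := (sq_abs _).symm
        _ < (Real.sqrt (ε1/3))^2 := by
            exact pow_lt_pow_left₀ hq2 (abs_nonneg _) two_ne_zero
        _ = ε1/3 := Real.sq_sqrt hc1.le
    have hsq3 : ST^2 < ε1/3 := by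
      calc ST^2 = |ST|^2 := (sq_abs _).symm
        _ < (Real.sqrt (ε1/3))^2 := by
            exact pow_lt_pow_left₀ hq3 (abs_nonneg _) two_ne_zero
        _ = ε1/3 := Real.sq_sqrt hc1.le
    have hωlt : ε1 < |SW - SU^2 + ST^2| := by rw [← hid]; exact hω
    have hfin : |SW - SU^2 + ST^2| < ε1 := by
      rw [abs_lt]
      constructor <;>
        linarith [hsq2, hsq3, habs1.1, habs1.2, sq_nonneg ST, sq_nonneg SU]
    linarith
  -- measure chain
  have hm1 : Px {ωx | |randVar X n m k ωx - sampleVar X n ωx| > ε1}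
      ≤ ENNReal.ofReal ((∑ i : Fin n, (d i)^2 * variance (fun ω => gZ (X (i:ℕ) ω)) Px) / (ε1/3)^2)
        + (ENNReal.ofReal ((∑ i : Fin n, ((k i:ℝ)/m)^2 * variance (fun ω => gY (X (i:ℕ) ω)) Px) / (Real.sqrt (ε1/3))^2)
          + ENNReal.ofReal ((∑ i : Fin n, ((1:ℝ)/n)^2 * variance (fun ω => gY (X (i:ℕ) ω)) Px) / (Real.sqrt (ε1/3))^2)) := by
    refine le_trans (measure_mono hsub) ?_
    refine le_trans (measure_union_le _ _) ?_
    refine add_le_add hch1 ?_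
    refine le_trans (measure_union_le _ _) ?_
    exact add_le_add hch2 hch3
  set b1 : ℝ := 9 * V4 * A / ε1^2 with hb1
  set b2 : ℝ := 3 * σ2 * (A + 1/n) / ε1 with hb2
  set b3 : ℝ := 3 * σ2 * (1/n) / ε1 with hb3
  have hb1nn : 0 ≤ b1 := by positivity
  have hb2nn : 0 ≤ b2 := by
    have : 0 ≤ A + 1/n := by positivity
    positivity
  have hb3nn : 0 ≤ b3 := by positivity
  have hr1 : (∑ i : Fin n, (d i)^2 * variance (fun ω => gZ (X (i:ℕ) ω)) Px) / (ε1/3)^2 ≤ b1 := by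
    rw [hb1]
    have h1 : (∑ i : Fin n, (d i)^2 * variance (fun ω => gZ (X (i:ℕ) ω)) Px) / (ε1/3)^2
        ≤ (A * V4) / (ε1/3)^2 := by
      apply div_le_div_of_nonneg_right hv1 (by positivity)
    refine le_trans h1 (le_of_eq ?_)
    field_simp
    ring
  have hr2 : (∑ i : Fin n, ((k i:ℝ)/m)^2 * variance (fun ω => gY (X (i:ℕ) ω)) Px)
      / (Real.sqrt (ε1/3))^2 ≤ b2 := by
    rw [hv2, Real.sq_sqrt hc1.le, hb2]
    refine le_of_eq ?_
    have hε1ne : ε1 ≠ 0 := ne_of_gt hε1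
    field_simp
  have hr3 : (∑ i : Fin n, ((1:ℝ)/n)^2 * variance (fun ω => gY (X (i:ℕ) ω)) Px)
      / (Real.sqrt (ε1/3))^2 ≤ b3 := by
    rw [hv3, Real.sq_sqrt hc1.le, hb3]
    refine le_of_eq ?_
    have hε1ne : ε1 ≠ 0 := ne_of_gt hε1
    field_simp
  have hle : Px {ωx | |randVar X n m k ωx - sampleVar X n ωx| > ε1}
      ≤ ENNReal.ofReal (b1 + (b2 + b3)) := by
    rw [ENNReal.ofReal_add hb1nn (add_nonneg hb2nn hb3nn), ENNReal.ofReal_add hb2nn hb3nn]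
    refine le_trans hm1 ?_
    refine add_le_add (ENNReal.ofReal_le_ofReal hr1) ?_
    exact add_le_add (ENNReal.ofReal_le_ofReal hr2) (ENNReal.ofReal_le_ofReal hr3)
  have := ENNReal.toReal_le_of_le_ofReal (add_nonneg hb1nn (add_nonneg hb2nn hb3nn)) hle
  calc (Px {ωx | |randVar X n m k ωx - sampleVar X n ωx| > ε1}).toReal
      ≤ b1 + (b2 + b3) := this
    _ = 9 * V4 * A / ε1^2 + 3 * σ2 * (A + 1/n) / ε1 + 3 * σ2 * (1/n) / ε1 := by
        rw [hb1, hb2, hb3]; ring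

lemma wside {Ωw : Type} [MeasurableSpace Ωw] (Pw : Measure Ωw) [IsProbabilityMeasure Pw]
    {n mm : ℕ} (hn : 0 < n) (hmm : 0 < mm)
    (w : Fin n → Ωw → ℕ) (hw : IsUnifMultinomial Pw n mm w)
    (E : Set Ωw) (t : ℝ) (ht : 0 < t)
    (hE : ∀ ωw ∈ E, ∀ k : Fin n → ℕ, (∑ i, k i = mm) → (∀ i, w i ωw = k i) →
        t < ∑ j, ((k j : ℝ)/mm - 1/n)^2) :
    (Pw E).toReal ≤ (1/t^2) * ((n:ℝ)/(mm:ℝ)^2) := by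
  classical
  set S := Finset.piAntidiag (Finset.univ : Finset (Fin n)) mm with hS
  set C : (Fin n → ℕ) → Set Ωw := fun k => {ωw | ∀ i, w i ωw = k i} with hC
  have hCmeas : ∀ k, MeasurableSet (C k) := by
    intro k
    have h1 : C k = ⋂ i, (w i)⁻¹' {k i} := by
      ext ω; simp [hC, Set.mem_iInter]
    rw [h1]
    exact MeasurableSet.iInter fun i => (hw.1 i) (measurableSet_singleton _)
  have hPval : ∀ k ∈ S, Pw (C k)
      = ENNReal.ofReal ((Nat.multinomial Finset.univ k : ℝ) * ((1:ℝ)/n)^mm) := by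
    intro k hk
    simp only [hS, Finset.mem_piAntidiag] at hk
    have h1 := hw.2 k
    rw [if_pos hk.1] at h1
    have h2 : (mm.factorial : ℝ) / (∏ i, ((k i).factorial : ℝ)) * ((1:ℝ)/n)^mm
        = (Nat.multinomial Finset.univ k : ℝ) * ((1:ℝ)/n)^mm := by
      rw [multinomial_cast k, hk.1]
    rw [← ENNReal.ofReal_toReal (measure_ne_top Pw (C k)), h1, ← h2]
  have hdisj : Set.PairwiseDisjoint (↑S : Set (Fin n → ℕ)) C := by
    intro k₁ _ k₂ _ hne
    refine Set.disjoint_left.2 fun ω h₁ h₂ => hne ?_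
    funext i
    rw [← h₁ i, ← h₂ i]
  have hUnion : Pw (⋃ k ∈ S, C k) = 1 := by
    rw [measure_biUnion_finset hdisj (fun k _ => hCmeas k)]
    rw [Finset.sum_congr rfl hPval]
    rw [← ENNReal.ofReal_sum_of_nonneg (fun k _ => by positivity)]
    rw [FM0 hn mm]
    simp
  have hcompl : Pw (⋃ k ∈ S, C k)ᶜ = 0 := by
    rw [measure_compl (Finset.measurableSet_biUnion S fun k _ => hCmeas k)
      (measure_ne_top _ _), hUnion, measure_univ]
    simp
  set S' := S.filter (fun k => t < ∑ j, ((k j : ℝ)/mm - 1/n)^2) with hS'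
  have hsub : E ⊆ (⋃ k ∈ S', C k) ∪ (⋃ k ∈ S, C k)ᶜ := by
    intro ω hω
    by_cases hU : ω ∈ ⋃ k ∈ S, C k
    · left
      simp only [Set.mem_iUnion, exists_prop] at hU ⊢
      obtain ⟨k, hkS, hkC⟩ := hU
      have hksum : ∑ i, k i = mm := by
        simp only [hS, Finset.mem_piAntidiag] at hkS
        exact hkS.1
      refine ⟨k, Finset.mem_filter.2 ⟨hkS, ?_⟩, hkC⟩
      exact hE ω hω k hksum hkC
    · right; exact hU
  have hm1 : Pw E ≤ ∑ k ∈ S', Pw (C k) := by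
    calc Pw E ≤ Pw (⋃ k ∈ S', C k) + Pw (⋃ k ∈ S, C k)ᶜ :=
          le_trans (measure_mono hsub) (measure_union_le _ _)
      _ = Pw (⋃ k ∈ S', C k) := by rw [hcompl, add_zero]
      _ ≤ ∑ k ∈ S', Pw (C k) := measure_biUnion_finset_le _ _
  have hm2 : Pw E ≤ ENNReal.ofReal
      (∑ k ∈ S', (Nat.multinomial Finset.univ k : ℝ) * ((1:ℝ)/n)^mm) := by
    rw [ENNReal.ofReal_sum_of_nonneg (fun k _ => by positivity)]
    refine le_trans hm1 (le_of_eq ?_)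
    exact Finset.sum_congr rfl fun k hk => hPval k (Finset.mem_filter.1 hk).1
  have hPE : (Pw E).toReal
      ≤ ∑ k ∈ S', (Nat.multinomial Finset.univ k : ℝ) * ((1:ℝ)/n)^mm :=
    ENNReal.toReal_le_of_le_ofReal
      (Finset.sum_nonneg fun k _ => by positivity) hm2
  have hstep : ∑ k ∈ S', (Nat.multinomial Finset.univ k : ℝ) * ((1:ℝ)/n)^mm
      ≤ (1/t^2) * ∑ k ∈ S, (Nat.multinomial Finset.univ k : ℝ) * ((1:ℝ)/n)^mm
          * (∑ j, ((k j : ℝ)/mm - 1/n)^2)^2 := by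
    rw [Finset.mul_sum]
    have h1 : ∀ k ∈ S', (Nat.multinomial Finset.univ k : ℝ) * ((1:ℝ)/n)^mm
        ≤ (1/t^2) * ((Nat.multinomial Finset.univ k : ℝ) * ((1:ℝ)/n)^mm
            * (∑ j, ((k j : ℝ)/mm - 1/n)^2)^2) := by
      intro k hk
      have hkA : t < ∑ j, ((k j : ℝ)/mm - 1/n)^2 := (Finset.mem_filter.1 hk).2
      have hA2 : t^2 < (∑ j, ((k j : ℝ)/mm - 1/n)^2)^2 :=
        pow_lt_pow_left₀ hkA ht.le two_ne_zero
      have hpmf : (0:ℝ) ≤ (Nat.multinomial Finset.univ k : ℝ) * ((1:ℝ)/n)^mm := by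
        positivity
      rw [show (1/t^2) * ((Nat.multinomial Finset.univ k : ℝ) * ((1:ℝ)/n)^mm
          * (∑ j, ((k j : ℝ)/mm - 1/n)^2)^2)
        = ((Nat.multinomial Finset.univ k : ℝ) * ((1:ℝ)/n)^mm)
          * ((∑ j, ((k j : ℝ)/mm - 1/n)^2)^2 / t^2) from by ring]
      nth_rewrite 1 [show (Nat.multinomial Finset.univ k : ℝ) * ((1:ℝ)/n)^mm
        = ((Nat.multinomial Finset.univ k : ℝ) * ((1:ℝ)/n)^mm) * 1 from by ring]
      refine mul_le_mul_of_nonneg_left ?_ hpmf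
      rw [le_div_iff₀ (by positivity)]
      linarith
    refine le_trans (Finset.sum_le_sum h1) ?_
    refine Finset.sum_le_sum_of_subset_of_nonneg (Finset.filter_subset _ _) ?_
    intro k _ _
    have h0 : (0:ℝ) ≤ (Nat.multinomial Finset.univ k : ℝ) * ((1:ℝ)/n)^mm
        * (∑ j, ((k j : ℝ)/mm - 1/n)^2)^2 := by positivity
    positivity
  refine le_trans hPE (le_trans hstep ?_)
  have := sumPA2 (n := n) (m := mm) hn hmm
  have ht2 : (0:ℝ) ≤ 1/t^2 := by positivity
  calc (1/t^2) * ∑ k ∈ S, (Nat.multinomial Finset.univ k : ℝ) * ((1:ℝ)/n)^mm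
          * (∑ j, ((k j : ℝ)/mm - 1/n)^2)^2
      ≤ (1/t^2) * ((n:ℝ)/(mm:ℝ)^2) := mul_le_mul_of_nonneg_left this ht2

theorem randVar_rate
    {Ωx Ωw : Type} [MeasurableSpace Ωx] [MeasurableSpace Ωw]
    (Px : Measure Ωx) (Pw : Measure Ωw)
    [IsProbabilityMeasure Px] [IsProbabilityMeasure Pw]
    (X : ℕ → Ωx → ℝ)
    (hXmeas : ∀ i, Measurable (X i))
    (hXindep : iIndepFun X Px)
    (hXid : ∀ i, IdentDistrib (X i) (X 0) Px Px)
    (μ σ2 : ℝ)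
    (hXint : Integrable (X 0) Px)
    (hμ : μ = ∫ ω, X 0 ω ∂Px)
    (hVarInt : Integrable (fun ω => (X 0 ω - μ) ^ 2) Px)
    (hσ2 : σ2 = ∫ ω, (X 0 ω - μ) ^ 2 ∂Px)
    (hσ2pos : 0 < σ2)
    (hM4 : Integrable (fun ω => (X 0 ω) ^ 4) Px)
    (m : ℕ → ℕ) (w : (n : ℕ) → Fin n → Ωw → ℕ)
    (hw : ∀ n, IsUnifMultinomial Pw n (m n) (w n))
    (hm : Tendsto m atTop atTop)
    :
    ∀ ε1 ε2 : ℝ, 0 < ε1 → 0 < ε2 →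
      ∃ K : ℝ, 0 < K ∧ ∃ N : ℕ, ∀ n ≥ N,
        (Pw {ωw | (Px {ωx |
            |randVar X n (m n) (fun i => w n i ωw) ωx - sampleVar X n ωx| > ε1}).toReal
              > ε2}).toReal
          ≤ K * (n : ℝ) / (m n : ℝ) ^ 2 := by
  intro ε1 ε2 hε1 hε2
  set V4 : ℝ := ∫ ω, (X 0 ω - μ)^4 ∂Px with hV4def
  have hV4nn : 0 ≤ V4 := integral_nonneg fun ω => by positivity
  set t : ℝ := min (ε1^2*ε2/(27*(V4+1))) (ε1*ε2/(18*σ2)) with htdef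
  have ht : 0 < t := lt_min (by positivity) (by positivity)
  set c : ℝ := 18*σ2/(ε1*ε2) with hcdef
  have hc0 : 0 < c := by positivity
  refine ⟨1/t^2, by positivity, ?_⟩
  obtain ⟨N1, hN1⟩ := eventually_atTop.1 (hm.eventually_ge_atTop 1)
  refine ⟨max (⌈c⌉₊ + 1) N1, fun n hnN => ?_⟩
  have hn1 : ⌈c⌉₊ + 1 ≤ n := le_trans (le_max_left _ _) hnN
  have hn : 0 < n := lt_of_lt_of_le (Nat.succ_pos _) hn1
  have hmm : 0 < m n := hN1 n (le_trans (le_max_right _ _) hnN)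
  have hcn : c ≤ (n:ℝ) := by
    calc c ≤ (⌈c⌉₊ : ℝ) := Nat.le_ceil c
    _ ≤ n := by exact_mod_cast Nat.le_of_succ_le hn1
  have hnR : (0:ℝ) < n := by exact_mod_cast hn
  have hinv : 1/(n:ℝ) ≤ ε1*ε2/(18*σ2) := by
    calc 1/(n:ℝ) ≤ 1/c := one_div_le_one_div_of_le hc0 hcn
    _ = ε1*ε2/(18*σ2) := by rw [hcdef, one_div_div]
  have hE : ∀ ωw ∈ {ωw | (Px {ωx |
        |randVar X n (m n) (fun i => w n i ωw) ωx - sampleVar X n ωx| > ε1}).toReal > ε2},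
      ∀ k : Fin n → ℕ, (∑ i, k i = m n) → (∀ i, w n i ωw = k i) →
        t < ∑ j, ((k j : ℝ)/(m n) - 1/n)^2 := by
    intro ωw hωw k hksum hkw
    by_contra hA
    push_neg at hA
    have hfun : (fun i => w n i ωw) = k := funext hkw
    rw [Set.mem_setOf_eq, hfun] at hωw
    have hx := xside Px X hXmeas hXindep hXid μ σ2 hXint hμ hVarInt hσ2 hM4
      n (m n) hn hmm k hksum ε1 hε1
    set A : ℝ := ∑ j, ((k j : ℝ)/(m n) - 1/n)^2 with hAdef
    have hAnn : 0 ≤ A := Finset.sum_nonneg fun j _ => sq_nonneg _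
    have hA1 : A ≤ ε1^2*ε2/(27*(V4+1)) := le_trans hA (by rw [htdef]; exact min_le_left _ _)
    have hA2 : A ≤ ε1*ε2/(18*σ2) := le_trans hA (by rw [htdef]; exact min_le_right _ _)
    have h1 : 9 * V4 * A / ε1^2 ≤ ε2/3 := by
      rw [div_le_iff₀ (by positivity)]
      calc 9*V4*A ≤ 9*(V4+1)*A := by nlinarith
        _ ≤ 9*(V4+1)*(ε1^2*ε2/(27*(V4+1))) :=
            mul_le_mul_of_nonneg_left hA1 (by positivity)
        _ = ε2/3*ε1^2 := by field_simp; ring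
    have h2 : 3 * σ2 * (A + 1/n) / ε1 ≤ ε2/3 := by
      rw [div_le_iff₀ hε1]
      calc 3*σ2*(A + 1/(n:ℝ)) ≤ 3*σ2*(ε1*ε2/(18*σ2) + ε1*ε2/(18*σ2)) :=
            mul_le_mul_of_nonneg_left (add_le_add hA2 hinv) (by positivity)
        _ = ε2/3*ε1 := by field_simp; ring
    have h3 : 3 * σ2 * (1/(n:ℝ)) / ε1 ≤ ε2/6 := by
      rw [div_le_iff₀ hε1]
      calc 3*σ2*(1/(n:ℝ)) ≤ 3*σ2*(ε1*ε2/(18*σ2)) :=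
            mul_le_mul_of_nonneg_left hinv (by positivity)
        _ = ε2/6*ε1 := by field_simp; ring
    have hfin : (Px {ωx | |randVar X n (m n) k ωx - sampleVar X n ωx| > ε1}).toReal
        ≤ ε2/3 + ε2/3 + ε2/6 := by
      rw [← hV4def] at hx
      exact le_trans hx (by linarith)
    linarith [hωw, hfin]
  have hws := wside Pw hn hmm (w n) (hw n) _ t ht hE
  refine le_trans hws (le_of_eq ?_)
  rw [mul_div_assoc]
end

section
/- Let X, X_1, X_2, ... be i.i.d. real-valued random variables with mean μ and variance σ², 0 < σ² < +∞, and fix the sample size n ≥ 2. For each m, let (w_1^{(n)}, ..., w_n^{(n)}) be multinomial(m; 1/n, ..., 1/n) weights independent of the X_i's. Then, as m → +∞ with n fixed, the randomized sample variance S²_{m,n} converges to the sample variance S_n² in probability-P_{X,w}; that is, for every ε > 0, P_{X,w}( |S²_{m,n} − S_n²| > ε ) → 0 as m → ∞. -/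
open MeasureTheory ProbabilityTheory Filter

section AuxMultinomial

open Finset

/-- The multinomial pmf value. -/
noncomputable def mpmf (n s : ℕ) (k : Fin n → ℕ) : ℝ :=
  (Nat.factorial s : ℝ) / (∏ i, (Nat.factorial (k i) : ℝ)) * (1 / n) ^ s

lemma mpmf_nonneg (n s : ℕ) (k : Fin n → ℕ) : 0 ≤ mpmf n s k := by
  unfold mpmf
  positivity

lemma mpmf_step (n s : ℕ) (hs : 1 ≤ s) (k : Fin n → ℕ) (i : Fin n) (hki : k i ≠ 0) :
    mpmf n s k * (k i : ℝ) = ((s : ℝ) / n) * mpmf n (s - 1) (Function.update k i (k i - 1)) := by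
  classical
  have hn : (0:ℝ) < n := by
    have : 0 < n := Fin.pos i
    exact_mod_cast this
  obtain ⟨r, hr⟩ : ∃ r, k i = r + 1 := ⟨k i - 1, by omega⟩
  obtain ⟨t, ht⟩ : ∃ t, s = t + 1 := ⟨s - 1, by omega⟩
  have h1 : ∏ j, (Nat.factorial (Function.update k i (k i - 1) j) : ℝ)
      = (Nat.factorial r : ℝ) * ∏ j ∈ Finset.univ.erase i, (Nat.factorial (k j) : ℝ) := by
    rw [← Finset.mul_prod_erase Finset.univ _ (Finset.mem_univ i)]
    refine congrArg₂ _ ?_ ?_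
    · rw [Function.update_self]
      congr 2
      omega
    · exact Finset.prod_congr rfl fun j hj =>
        by rw [Function.update_of_ne (Finset.ne_of_mem_erase hj)]
  have h2 : ∏ j, (Nat.factorial (k j) : ℝ)
      = (((r:ℝ)+1) * (Nat.factorial r : ℝ)) * ∏ j ∈ Finset.univ.erase i, (Nat.factorial (k j) : ℝ) := by
    rw [← Finset.mul_prod_erase Finset.univ _ (Finset.mem_univ i), hr]
    rw [Nat.factorial_succ]
    push_cast
    ring
  have herase : (0:ℝ) < ∏ j ∈ Finset.univ.erase i, (Nat.factorial (k j) : ℝ) := by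
    refine Finset.prod_pos fun j _ => ?_
    exact_mod_cast Nat.factorial_pos (k j)
  have hrf : (0:ℝ) < (Nat.factorial r : ℝ) := by exact_mod_cast Nat.factorial_pos r
  unfold mpmf
  rw [h1, h2, ht]
  simp only [Nat.add_sub_cancel]
  rw [Nat.factorial_succ, hr]
  rw [pow_succ]
  push_cast
  field_simp

lemma update_mem_shift {n s : ℕ} {k : Fin n → ℕ} {i : Fin n}
    (hk : ∑ j, k j = s) (hki : k i ≠ 0) :
    ∑ j, Function.update k i (k i - 1) j = s - 1 := by
  classical
  rw [Finset.sum_update_of_mem (Finset.mem_univ i)]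
  rw [← Finset.add_sum_erase Finset.univ k (Finset.mem_univ i)] at hk
  rw [Finset.erase_eq] at hk
  omega

lemma mpmf_shift (n s : ℕ) (hs : 1 ≤ s) (i : Fin n) (f : (Fin n → ℕ) → ℝ) :
    ∑ k ∈ Finset.Nat.antidiagonalTuple n s,
        mpmf n s k * (k i : ℝ) * f (Function.update k i (k i - 1))
      = ((s : ℝ) / n) *
        ∑ k ∈ Finset.Nat.antidiagonalTuple n (s - 1), mpmf n (s - 1) k * f k := by
  classical
  have hfilter : ∑ k ∈ (Finset.Nat.antidiagonalTuple n s).filter (fun k => k i ≠ 0),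
      mpmf n s k * (k i : ℝ) * f (Function.update k i (k i - 1))
      = ∑ k ∈ Finset.Nat.antidiagonalTuple n s,
        mpmf n s k * (k i : ℝ) * f (Function.update k i (k i - 1)) := by
    refine Finset.sum_filter_of_ne fun k _ hne => ?_
    intro h0
    apply hne
    simp [h0]
  rw [← hfilter, Finset.mul_sum]
  refine Finset.sum_bij' (fun k _ => Function.update k i (k i - 1))
    (fun k _ => Function.update k i (k i + 1)) ?_ ?_ ?_ ?_ ?_
  · intro k hk
    rw [Finset.mem_filter, Finset.Nat.mem_antidiagonalTuple] at hk
    rw [Finset.Nat.mem_antidiagonalTuple]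
    exact update_mem_shift hk.1 hk.2
  · intro k hk
    rw [Finset.Nat.mem_antidiagonalTuple] at hk
    rw [Finset.mem_filter, Finset.Nat.mem_antidiagonalTuple]
    constructor
    · rw [Finset.sum_update_of_mem (Finset.mem_univ i)]
      rw [← Finset.add_sum_erase Finset.univ k (Finset.mem_univ i)] at hk
      rw [Finset.erase_eq] at hk
      omega
    · simp
  · intro k hk
    rw [Finset.mem_filter] at hk
    funext j
    rcases eq_or_ne j i with rfl | hj
    · simp only [Function.update_self]
      omega
    · simp [Function.update_of_ne hj]
  · intro k hk
    funext j
    rcases eq_or_ne j i with rfl | hj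
    · simp only [Function.update_self]
      omega
    · simp [Function.update_of_ne hj]
  · intro k hk
    rw [Finset.mem_filter] at hk
    rw [mpmf_step n s hs k i hk.2]
    ring

lemma sum_mpmf_eq_one {Ωw : Type} [MeasurableSpace Ωw] (Pw : MeasureTheory.Measure Ωw)
    [MeasureTheory.IsProbabilityMeasure Pw]
    (n s : ℕ) (w : Fin n → Ωw → ℕ) (hw : IsUnifMultinomial Pw n s w) :
    ∑ k ∈ Finset.Nat.antidiagonalTuple n s, mpmf n s k = 1 := by
  classical
  obtain ⟨hmeas, hpmf⟩ := hw
  set e : (Fin n → ℕ) → Set Ωw := fun k => {ω | ∀ i, w i ω = k i} with he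
  have emeas : ∀ k, MeasurableSet (e k) := by
    intro k
    have : e k = ⋂ i, (w i) ⁻¹' {k i} := by
      ext ω; simp [he, Set.mem_iInter]
    rw [this]
    exact MeasurableSet.iInter fun i => hmeas i (measurableSet_singleton _)
  have edisj : Pairwise (Function.onFun Disjoint e) := by
    intro k k' hkk'
    rw [Function.onFun, Set.disjoint_left]
    intro ω h1 h2
    exact hkk' (funext fun i => (h1 i).symm.trans (h2 i))
  have ecover : ⋃ k, e k = Set.univ := by
    ext ω
    simp only [Set.mem_iUnion, Set.mem_univ, iff_true]
    exact ⟨fun i => w i ω, fun i => rfl⟩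
  have h1 : ∑' k, Pw (e k) = 1 := by
    rw [← MeasureTheory.measure_iUnion edisj emeas, ecover, measure_univ]
  have hzero : ∀ k ∉ Finset.Nat.antidiagonalTuple n s, Pw (e k) = 0 := by
    intro k hk
    have h := hpmf k
    rw [if_neg (by simpa [Finset.Nat.mem_antidiagonalTuple] using hk)] at h
    rcases (ENNReal.toReal_eq_zero_iff _).mp h with h' | h'
    · exact h'
    · exact absurd h' (MeasureTheory.measure_ne_top Pw _)
  rw [tsum_eq_sum hzero] at h1
  have h2 := congrArg ENNReal.toReal h1
  rw [ENNReal.toReal_sum (fun k _ => MeasureTheory.measure_ne_top Pw _), ENNReal.toReal_one] at h2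
  rw [← h2]
  refine Finset.sum_congr rfl fun k hk => ?_
  have hks := Finset.Nat.mem_antidiagonalTuple.mp hk
  rw [hpmf k, if_pos hks]
  rfl

lemma mpmf_moment1 (n : ℕ)
    (hnorm : ∀ s, ∑ k ∈ Finset.Nat.antidiagonalTuple n s, mpmf n s k = 1)
    (s : ℕ) (hs : 1 ≤ s) (i : Fin n) :
    ∑ k ∈ Finset.Nat.antidiagonalTuple n s, mpmf n s k * (k i : ℝ) = (s : ℝ) / n := by
  have h := mpmf_shift n s hs i (fun _ => 1)
  simpa [hnorm (s - 1)] using h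

lemma mpmf_moment2 (n : ℕ)
    (hnorm : ∀ s, ∑ k ∈ Finset.Nat.antidiagonalTuple n s, mpmf n s k = 1)
    (s : ℕ) (hs : 2 ≤ s) (i : Fin n) :
    ∑ k ∈ Finset.Nat.antidiagonalTuple n s, mpmf n s k * (k i : ℝ) * ((k i : ℝ) - 1)
      = (s : ℝ) * ((s : ℝ) - 1) / (n : ℝ) ^ 2 := by
  have hshift := mpmf_shift n s (by omega) i (fun k => (k i : ℝ))
  have hterm : ∀ k ∈ Finset.Nat.antidiagonalTuple n s,
      mpmf n s k * (k i : ℝ) * ((k i : ℝ) - 1)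
        = mpmf n s k * (k i : ℝ) * ((Function.update k i (k i - 1) : Fin n → ℕ) i : ℝ) := by
    intro k _
    rcases Nat.eq_zero_or_pos (k i) with h | h
    · simp [h]
    · rw [Function.update_self]
      congr 1
      rw [Nat.cast_sub h]
      norm_num
  rw [Finset.sum_congr rfl hterm, hshift, mpmf_moment1 n hnorm (s - 1) (by omega) i]
  have hcast : ((s - 1 : ℕ) : ℝ) = (s : ℝ) - 1 := by
    rw [Nat.cast_sub (by omega)]
    norm_num
  rw [hcast]
  ring

lemma mpmf_second_moment (n : ℕ)
    (hnorm : ∀ s, ∑ k ∈ Finset.Nat.antidiagonalTuple n s, mpmf n s k = 1)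
    (s : ℕ) (hs : 2 ≤ s) (hn : 1 ≤ n) (i : Fin n) :
    ∑ k ∈ Finset.Nat.antidiagonalTuple n s, mpmf n s k * ((k i : ℝ) / s - 1 / n) ^ 2
      = ((n : ℝ) - 1) / (s * (n : ℝ) ^ 2) := by
  have hsR : (0:ℝ) < s := by exact_mod_cast (by omega : 0 < s)
  have hnR : (0:ℝ) < n := by exact_mod_cast (by omega : 0 < n)
  have hterm : ∀ k ∈ Finset.Nat.antidiagonalTuple n s,
      mpmf n s k * ((k i : ℝ) / s - 1 / n) ^ 2
        = (1 / (s:ℝ)^2) * (mpmf n s k * (k i : ℝ) * ((k i : ℝ) - 1))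
          + (1 / (s:ℝ)^2 - 2 / ((s:ℝ) * n)) * (mpmf n s k * (k i : ℝ))
          + (1 / (n:ℝ)^2) * mpmf n s k := by
    intro k _
    field_simp
    ring
  rw [Finset.sum_congr rfl hterm]
  rw [Finset.sum_add_distrib, Finset.sum_add_distrib, ← Finset.mul_sum, ← Finset.mul_sum,
    ← Finset.mul_sum]
  rw [mpmf_moment2 n hnorm s hs i, mpmf_moment1 n hnorm s (by omega) i, hnorm s]
  field_simp
  ring

end AuxMultinomial
section DetBound

lemma det_bound {Ωx : Type} (X : ℕ → Ωx → ℝ) (n m : ℕ) (hn : 1 ≤ n) (hm : 1 ≤ m)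
    (ωx : Ωx) (k : Fin n → ℕ) (hk : ∑ i, k i = m) (δ : ℝ)
    (hδ : ∀ i, |(k i : ℝ) / m - 1 / n| ≤ δ) :
    |randVar X n m k ωx - sampleVar X n ωx|
      ≤ 8 * n * δ * ((∑ i : Fin n, |X i ωx|) + 1) ^ 2 := by
  classical
  have hmR : (0:ℝ) < m := by exact_mod_cast hm
  have hnR : (0:ℝ) < n := by exact_mod_cast hn
  set a : Fin n → ℝ := fun i => X i ωx with ha
  set A : ℝ := ∑ i : Fin n, |a i| with hA
  have hA0 : 0 ≤ A := Finset.sum_nonneg fun i _ => abs_nonneg _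
  have habs : ∀ i, |a i| ≤ A := fun i =>
    Finset.single_le_sum (fun j _ => abs_nonneg (a j)) (Finset.mem_univ i)
  have hδ0 : 0 ≤ δ := le_trans (abs_nonneg _) (hδ ⟨0, hn⟩)
  have hkm : ∀ i, (k i : ℝ) / m ≤ 1 := by
    intro i
    rw [div_le_one hmR]
    have : k i ≤ m := hk ▸ Finset.single_le_sum (fun j _ => Nat.zero_le (k j)) (Finset.mem_univ i)
    exact_mod_cast this
  have hkm0 : ∀ i, (0:ℝ) ≤ (k i : ℝ) / m := fun i => by positivity
  set R : ℝ := randMean X n m k ωx with hR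
  set S : ℝ := sampleMean X n ωx with hS
  have hRsum : R = ∑ i : Fin n, ((k i : ℝ) / m) * a i := by
    rw [hR]; unfold randMean
    rw [Finset.sum_div]
    exact Finset.sum_congr rfl fun i _ => by ring
  have hSsum : S = ∑ i : Fin n, (1 / (n:ℝ)) * a i := by
    rw [hS]; unfold sampleMean
    rw [Finset.sum_div]
    exact Finset.sum_congr rfl fun i _ => by ring
  have hRabs : |R| ≤ A := by
    rw [hRsum]
    calc |∑ i : Fin n, ((k i : ℝ) / m) * a i| ≤ ∑ i : Fin n, |((k i : ℝ) / m) * a i| :=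
          Finset.abs_sum_le_sum_abs _ _
      _ ≤ ∑ i : Fin n, |a i| := by
          refine Finset.sum_le_sum fun i _ => ?_
          rw [abs_mul, abs_of_nonneg (hkm0 i)]
          exact mul_le_of_le_one_left (abs_nonneg _) (hkm i)
      _ = A := rfl
  have hSabs : |S| ≤ A := by
    rw [hSsum]
    calc |∑ i : Fin n, (1 / (n:ℝ)) * a i| ≤ ∑ i : Fin n, |(1 / (n:ℝ)) * a i| :=
          Finset.abs_sum_le_sum_abs _ _
      _ ≤ ∑ i : Fin n, |a i| := by
          refine Finset.sum_le_sum fun i _ => ?_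
          rw [abs_mul, abs_of_nonneg (by positivity : (0:ℝ) ≤ 1 / (n:ℝ))]
          refine mul_le_of_le_one_left (abs_nonneg _) ?_
          rw [div_le_one hnR]
          exact_mod_cast hn
      _ = A := rfl
  have hRS : |R - S| ≤ δ * A := by
    have : R - S = ∑ i : Fin n, ((k i : ℝ) / m - 1 / n) * a i := by
      rw [hRsum, hSsum, ← Finset.sum_sub_distrib]
      exact Finset.sum_congr rfl fun i _ => by ring
    rw [this]
    calc |∑ i : Fin n, ((k i : ℝ) / m - 1 / n) * a i|
        ≤ ∑ i : Fin n, |((k i : ℝ) / m - 1 / n) * a i| := Finset.abs_sum_le_sum_abs _ _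
      _ ≤ ∑ i : Fin n, δ * |a i| := by
          refine Finset.sum_le_sum fun i _ => ?_
          rw [abs_mul]
          exact mul_le_mul_of_nonneg_right (hδ i) (abs_nonneg _)
      _ = δ * A := by rw [← Finset.mul_sum]
  have hVr : randVar X n m k ωx = ∑ i : Fin n, ((k i : ℝ) / m) * (a i - R) ^ 2 := by
    unfold randVar
    rw [Finset.sum_div]
    exact Finset.sum_congr rfl fun i _ => by simp only [ha]; ring
  have hVs : sampleVar X n ωx = ∑ i : Fin n, (1 / (n:ℝ)) * (a i - S) ^ 2 := by
    unfold sampleVar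
    rw [Finset.sum_div]
    exact Finset.sum_congr rfl fun i _ => by simp only [ha]; ring
  have key : ∀ i : Fin n,
      |((k i : ℝ) / m) * (a i - R) ^ 2 - (1 / (n:ℝ)) * (a i - S) ^ 2|
        ≤ δ * (4 * A ^ 2) + (1 / (n:ℝ)) * (δ * A * (4 * A)) := by
    intro i
    have hai := habs i
    have haiR : |a i - R| ≤ 2 * A := by
      have := abs_sub_abs_le_abs_sub (a i) R
      have h2 := abs_sub (a i) R
      calc |a i - R| ≤ |a i| + |R| := abs_sub _ _
        _ ≤ 2 * A := by linarith
    have hsq : (a i - R) ^ 2 ≤ 4 * A ^ 2 := by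
      have h1 : (a i - R) ^ 2 = |a i - R| ^ 2 := (sq_abs _).symm
      rw [h1]
      calc |a i - R| ^ 2 ≤ (2 * A) ^ 2 := by
            exact pow_le_pow_left₀ (abs_nonneg _) haiR 2
        _ = 4 * A ^ 2 := by ring
    have hdiff : |(a i - R) ^ 2 - (a i - S) ^ 2| ≤ δ * A * (4 * A) := by
      have hfact : (a i - R) ^ 2 - (a i - S) ^ 2 = (S - R) * (2 * a i - R - S) := by ring
      rw [hfact, abs_mul]
      have h1 : |S - R| ≤ δ * A := by rw [abs_sub_comm]; exact hRS
      have h2 : |2 * a i - R - S| ≤ 4 * A := by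
        calc |2 * a i - R - S| ≤ |2 * a i| + |R| + |S| := by
              have := abs_sub (2 * a i - R) S
              have := abs_sub (2 * a i) R
              calc |2 * a i - R - S| ≤ |2 * a i - R| + |S| := abs_sub _ _
                _ ≤ |2 * a i| + |R| + |S| := by
                    have := abs_sub (2 * a i) R
                    linarith
          _ ≤ 4 * A := by
              rw [abs_mul]
              simp only [abs_two]
              linarith
      exact mul_le_mul h1 h2 (abs_nonneg _) (by positivity)
    have hsplit : ((k i : ℝ) / m) * (a i - R) ^ 2 - (1 / (n:ℝ)) * (a i - S) ^ 2
        = ((k i : ℝ) / m - 1 / n) * (a i - R) ^ 2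
          + (1 / (n:ℝ)) * ((a i - R) ^ 2 - (a i - S) ^ 2) := by ring
    rw [hsplit]
    calc |((k i : ℝ) / m - 1 / n) * (a i - R) ^ 2
          + (1 / (n:ℝ)) * ((a i - R) ^ 2 - (a i - S) ^ 2)|
        ≤ |((k i : ℝ) / m - 1 / n) * (a i - R) ^ 2|
          + |(1 / (n:ℝ)) * ((a i - R) ^ 2 - (a i - S) ^ 2)| := abs_add_le _ _
      _ ≤ δ * (4 * A ^ 2) + (1 / (n:ℝ)) * (δ * A * (4 * A)) := by
          gcongr ?_ + ?_
          · rw [abs_mul]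
            have h3 : |(a i - R) ^ 2| = (a i - R)^2 := abs_of_nonneg (sq_nonneg _)
            rw [h3]
            exact mul_le_mul (hδ i) hsq (sq_nonneg _) hδ0
          · rw [abs_mul, abs_of_nonneg (by positivity : (0:ℝ) ≤ 1 / (n:ℝ))]
            exact mul_le_mul_of_nonneg_left hdiff (by positivity)
  have hsum : |randVar X n m k ωx - sampleVar X n ωx|
      ≤ ∑ i : Fin n, (δ * (4 * A ^ 2) + (1 / (n:ℝ)) * (δ * A * (4 * A))) := by
    rw [hVr, hVs, ← Finset.sum_sub_distrib]
    calc |∑ i : Fin n, (((k i : ℝ) / m) * (a i - R) ^ 2 - (1 / (n:ℝ)) * (a i - S) ^ 2)|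
        ≤ ∑ i : Fin n, |((k i : ℝ) / m) * (a i - R) ^ 2 - (1 / (n:ℝ)) * (a i - S) ^ 2| :=
          Finset.abs_sum_le_sum_abs _ _
      _ ≤ _ := Finset.sum_le_sum fun i _ => key i
  rw [Finset.sum_const, Finset.card_univ, Fintype.card_fin, nsmul_eq_mul] at hsum
  have hAA : A ^ 2 ≤ (A + 1) ^ 2 := by nlinarith
  have hn1 : (1:ℝ) ≤ n := by exact_mod_cast hn
  calc |randVar X n m k ωx - sampleVar X n ωx|
      ≤ (n:ℝ) * (δ * (4 * A ^ 2) + (1 / (n:ℝ)) * (δ * A * (4 * A))) := hsum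
    _ = 4 * n * δ * A ^ 2 + 4 * δ * A ^ 2 := by field_simp
    _ ≤ 8 * n * δ * (A + 1) ^ 2 := by
        have h1 : 0 ≤ δ * A ^ 2 * ((n:ℝ) - 1) := by
          apply mul_nonneg (mul_nonneg hδ0 (sq_nonneg A)); linarith
        have h2 : 0 ≤ (n:ℝ) * δ * A := by positivity
        have h3 : 0 ≤ (n:ℝ) * δ := by positivity
        nlinarith [h1, h2, h3]
theorem randVar_consistency_fixed_n
    {Ωx Ωw : Type} [MeasurableSpace Ωx] [MeasurableSpace Ωw]
    (Px : Measure Ωx) (Pw : Measure Ωw)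
    [IsProbabilityMeasure Px] [IsProbabilityMeasure Pw]
    (X : ℕ → Ωx → ℝ)
    (hXmeas : ∀ i, Measurable (X i))
    (hXindep : iIndepFun X Px)
    (hXid : ∀ i, IdentDistrib (X i) (X 0) Px Px)
    (μ σ2 : ℝ)
    (hXint : Integrable (X 0) Px)
    (hμ : μ = ∫ ω, X 0 ω ∂Px)
    (hVarInt : Integrable (fun ω => (X 0 ω - μ) ^ 2) Px)
    (hσ2 : σ2 = ∫ ω, (X 0 ω - μ) ^ 2 ∂Px)
    (hσ2pos : 0 < σ2)
    (n : ℕ) (hn : 2 ≤ n)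
    (w : ℕ → Fin n → Ωw → ℕ)
    (hw : ∀ m, IsUnifMultinomial Pw n m (w m))
    :
    ∀ ε : ℝ, 0 < ε →
      Tendsto (fun m => ((Px.prod Pw) {p |
          |randVar X n m (fun i => w m i p.2) p.1 - sampleVar X n p.1| > ε}).toReal)
        atTop (nhds 0) := by
  classical
  intro ε hε
  have hn1 : 1 ≤ n := by omega
  have hnR : (0:ℝ) < n := by exact_mod_cast (by omega : 0 < n)
  have hnorm : ∀ s, ∑ k ∈ Finset.Nat.antidiagonalTuple n s, mpmf n s k = 1 :=
    fun s => sum_mpmf_eq_one Pw n s (w s) (hw s)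
  set A : Ωx → ℝ := fun ωx => ∑ i : Fin n, |X i ωx| with hAdef
  have hAmeas : Measurable A :=
    Finset.univ.measurable_sum fun i _ => (hXmeas i).abs
  have hA0 : ∀ ωx, 0 ≤ A ωx := fun ωx => Finset.sum_nonneg fun i _ => abs_nonneg _
  rw [NormedAddCommGroup.tendsto_nhds_zero]
  intro η hη
  -- choose the truncation level M
  have hMtend : Tendsto (fun M : ℕ => (Px {ωx | (M:ℝ) < A ωx}).toReal) atTop (nhds 0) := by
    have hs : ∀ M : ℕ, NullMeasurableSet {ωx | (M:ℝ) < A ωx} Px := fun M =>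
      (measurableSet_lt measurable_const hAmeas).nullMeasurableSet
    have hanti : Antitone (fun M : ℕ => {ωx | (M:ℝ) < A ωx}) := by
      intro M M' h ωx hx
      simp only [Set.mem_setOf_eq] at hx ⊢
      exact lt_of_le_of_lt (by exact_mod_cast h) hx
    have hinter : ⋂ M : ℕ, {ωx | (M:ℝ) < A ωx} = ∅ := by
      ext ωx
      simp only [Set.mem_iInter, Set.mem_setOf_eq, Set.mem_empty_iff_false, iff_false, not_forall,
        not_lt]
      obtain ⟨M, hM⟩ := exists_nat_gt (A ωx)
      exact ⟨M, hM.le⟩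
    have h := tendsto_measure_iInter_atTop hs hanti ⟨0, measure_ne_top Px _⟩
    rw [hinter, measure_empty] at h
    have h2 := (ENNReal.tendsto_toReal (by simp : (0:ENNReal) ≠ ⊤)).comp h
    exact h2
  obtain ⟨M, hM⟩ := (hMtend.eventually (gt_mem_nhds (by linarith : (0:ℝ) < η/2))).exists
  set δ0 : ℝ := ε / (8 * n * ((M:ℝ) + 1) ^ 2) with hδ0def
  have hδ0pos : 0 < δ0 := by positivity
  -- the bad-weights event
  set W : ℕ → Set Ωw := fun m =>
    {ωw | (∑ i, w m i ωw ≠ m) ∨ ∃ i, δ0 < |(w m i ωw : ℝ)/m - 1/n|} with hWdef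
  -- bound on the bad-weights event
  have hWbound : ∀ m : ℕ, 2 ≤ m → (Pw (W m)).toReal ≤ 1 / ((m:ℝ) * δ0 ^ 2) := by
    intro m hm2
    have hmR : (0:ℝ) < m := by exact_mod_cast (by omega : 0 < m)
    set e : (Fin n → ℕ) → Set Ωw := fun k => {ωw | ∀ i, w m i ωw = k i} with hedef
    have hkpmf : ∀ k : Fin n → ℕ, (Pw (e k)).toReal =
        if ∑ i, k i = m then mpmf n m k else 0 := fun k => (hw m).2 k
    have hnull : ∀ k : Fin n → ℕ, ∑ i, k i ≠ m → Pw (e k) = 0 := by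
      intro k hk
      have h := hkpmf k
      rw [if_neg hk] at h
      rcases (ENNReal.toReal_eq_zero_iff _).mp h with h' | h'
      · exact h'
      · exact absurd h' (measure_ne_top Pw _)
    set T := Finset.Nat.antidiagonalTuple n m with hTdef
    set Bad := T.filter (fun k => ∃ i, δ0 < |(k i : ℝ)/m - 1/n|) with hBaddef
    have hWsub : W m ⊆ {ωw | ∑ i, w m i ωw ≠ m} ∪ ⋃ k ∈ Bad, e k := by
      intro ωw hωw
      rcases hωw with h | h
      · exact Or.inl h
      · by_cases hsum : ∑ i, w m i ωw = m
        · exact Or.inr (Set.mem_biUnion (show (fun i => w m i ωw) ∈ Bad by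
            rw [hBaddef, Finset.mem_filter]
            exact ⟨Finset.Nat.mem_antidiagonalTuple.mpr hsum, h⟩) (fun i => rfl))
        · exact Or.inl hsum
    have hN : Pw {ωw | ∑ i, w m i ωw ≠ m} = 0 := by
      have hEq : {ωw | ∑ i, w m i ωw ≠ m}
          = ⋃ k : {k : Fin n → ℕ // ∑ i, k i ≠ m}, e k.val := by
        ext ωw
        simp only [Set.mem_setOf_eq, Set.mem_iUnion]
        constructor
        · intro h
          exact ⟨⟨fun i => w m i ωw, h⟩, fun i => rfl⟩
        · rintro ⟨k, hk⟩
          have : ∑ i, w m i ωw = ∑ i, k.val i := Finset.sum_congr rfl fun i _ => hk i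
          rw [this]
          exact k.2
      rw [hEq]
      exact measure_iUnion_null fun k => hnull k.1 k.2
    have hPW : Pw (W m) ≤ ∑ k ∈ Bad, Pw (e k) := by
      calc Pw (W m) ≤ Pw ({ωw | ∑ i, w m i ωw ≠ m} ∪ ⋃ k ∈ Bad, e k) := measure_mono hWsub
        _ ≤ Pw {ωw | ∑ i, w m i ωw ≠ m} + Pw (⋃ k ∈ Bad, e k) := measure_union_le _ _
        _ = Pw (⋃ k ∈ Bad, e k) := by rw [hN, zero_add]
        _ ≤ ∑ k ∈ Bad, Pw (e k) := measure_biUnion_finset_le _ _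
    have h1 : (Pw (W m)).toReal ≤ ∑ k ∈ Bad, (Pw (e k)).toReal := by
      have hfin : (∑ k ∈ Bad, Pw (e k)) ≠ ⊤ :=
        (ENNReal.sum_lt_top.mpr fun k _ => measure_lt_top Pw _).ne
      refine le_trans (ENNReal.toReal_mono hfin hPW) ?_
      rw [ENNReal.toReal_sum fun k _ => measure_ne_top Pw _]
    have h2 : ∑ k ∈ Bad, (Pw (e k)).toReal = ∑ k ∈ Bad, mpmf n m k := by
      refine Finset.sum_congr rfl fun k hk => ?_
      rw [hBaddef, Finset.mem_filter] at hk
      rw [hkpmf k, if_pos (Finset.Nat.mem_antidiagonalTuple.mp hk.1)]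
    have h3 : ∑ k ∈ Bad, mpmf n m k
        ≤ (1/δ0^2) * ∑ k ∈ T, mpmf n m k * (∑ i : Fin n, ((k i:ℝ)/m - 1/n)^2) := by
      have step1 : ∑ k ∈ Bad, mpmf n m k
          ≤ ∑ k ∈ Bad, (1/δ0^2) * (mpmf n m k * (∑ i : Fin n, ((k i:ℝ)/m - 1/n)^2)) := by
        refine Finset.sum_le_sum fun k hk => ?_
        rw [hBaddef, Finset.mem_filter] at hk
        obtain ⟨i, hi⟩ := hk.2
        have hsq : δ0^2 ≤ ((k i:ℝ)/m - 1/n)^2 := by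
          have := pow_le_pow_left₀ hδ0pos.le hi.le 2
          rwa [sq_abs] at this
        have hsum : δ0^2 ≤ ∑ j : Fin n, ((k j:ℝ)/m - 1/n)^2 :=
          le_trans hsq (Finset.single_le_sum
            (f := fun j : Fin n => ((k j:ℝ)/m - 1/n)^2) (fun j _ => sq_nonneg _)
            (Finset.mem_univ i))
        have hmp := mpmf_nonneg n m k
        calc mpmf n m k = (1/δ0^2) * (mpmf n m k * δ0^2) := by field_simp
          _ ≤ (1/δ0^2) * (mpmf n m k * (∑ j : Fin n, ((k j:ℝ)/m - 1/n)^2)) := by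
              refine mul_le_mul_of_nonneg_left ?_ (by positivity)
              exact mul_le_mul_of_nonneg_left hsum hmp
      refine le_trans step1 ?_
      rw [← Finset.mul_sum]
      refine mul_le_mul_of_nonneg_left ?_ (by positivity)
      refine Finset.sum_le_sum_of_subset_of_nonneg (Finset.filter_subset _ _) ?_
      intro k _ _
      have := mpmf_nonneg n m k
      positivity
    have h4 : ∑ k ∈ T, mpmf n m k * (∑ i : Fin n, ((k i:ℝ)/m - 1/n)^2)
        = ((n:ℝ) - 1) / ((m:ℝ) * n) := by
      have hswap : ∑ k ∈ T, mpmf n m k * (∑ i : Fin n, ((k i:ℝ)/m - 1/n)^2)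
          = ∑ i : Fin n, ∑ k ∈ T, mpmf n m k * ((k i:ℝ)/m - 1/n)^2 := by
        rw [Finset.sum_comm]
        exact Finset.sum_congr rfl fun k _ => Finset.mul_sum _ _ _
      rw [hswap]
      have : ∀ i : Fin n, ∑ k ∈ T, mpmf n m k * ((k i:ℝ)/m - 1/n)^2
          = ((n:ℝ) - 1) / ((m:ℝ) * (n:ℝ)^2) :=
        fun i => mpmf_second_moment n hnorm m hm2 hn1 i
      rw [Finset.sum_congr rfl fun i _ => this i]
      rw [Finset.sum_const, Finset.card_univ, Fintype.card_fin, nsmul_eq_mul]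
      field_simp
    calc (Pw (W m)).toReal ≤ ∑ k ∈ Bad, mpmf n m k := h2 ▸ h1
      _ ≤ (1/δ0^2) * (((n:ℝ) - 1) / ((m:ℝ) * n)) := by rw [← h4]; exact h3
      _ ≤ 1 / ((m:ℝ) * δ0 ^ 2) := by
          have hfrac : ((n:ℝ) - 1) / ((m:ℝ) * n) ≤ 1 / (m:ℝ) := by
            rw [div_le_div_iff₀ (by positivity) hmR]
            nlinarith
          calc (1/δ0^2) * (((n:ℝ) - 1) / ((m:ℝ) * n))
              ≤ (1/δ0^2) * (1 / (m:ℝ)) := mul_le_mul_of_nonneg_left hfrac (by positivity)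
            _ = 1 / ((m:ℝ) * δ0 ^ 2) := by
                rw [div_mul_div_comm, one_mul, mul_comm]
    -- end hWbound
  -- the inclusion of the main event
  have hincl : ∀ m : ℕ, 1 ≤ m →
      {p : Ωx × Ωw | |randVar X n m (fun i => w m i p.2) p.1 - sampleVar X n p.1| > ε}
        ⊆ ({ωx | (M:ℝ) < A ωx} ×ˢ (Set.univ : Set Ωw)) ∪ ((Set.univ : Set Ωx) ×ˢ W m) := by
    intro m hm1 p hp
    rw [Set.mem_setOf_eq] at hp
    by_cases hA : (M:ℝ) < A p.1
    · exact Or.inl ⟨hA, Set.mem_univ _⟩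
    · refine Or.inr ⟨Set.mem_univ _, ?_⟩
      show (∑ i, w m i p.2 ≠ m) ∨ ∃ i, δ0 < |(w m i p.2 : ℝ)/m - 1/n|
      by_cases hsum : ∑ i, w m i p.2 = m
      · by_cases hδ : ∀ i, |(w m i p.2 : ℝ)/m - 1/n| ≤ δ0
        · exfalso
          have hbound := det_bound X n m hn1 hm1 p.1 (fun i => w m i p.2) hsum δ0 hδ
          have hA_le : A p.1 ≤ (M:ℝ) := not_lt.1 hA
          have hle : 8 * n * δ0 * ((A p.1) + 1) ^ 2 ≤ 8 * n * δ0 * ((M:ℝ) + 1) ^ 2 := by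
            have h1 : (A p.1) + 1 ≤ (M:ℝ) + 1 := by linarith
            have h2 : (0:ℝ) ≤ A p.1 + 1 := by linarith [hA0 p.1]
            have h3 : (0:ℝ) ≤ 8 * n * δ0 := by positivity
            have h4 := pow_le_pow_left₀ h2 h1 2
            nlinarith [mul_le_mul_of_nonneg_left h4 h3]
          have heq : 8 * n * δ0 * ((M:ℝ) + 1) ^ 2 = ε := by
            rw [hδ0def]
            field_simp
          linarith
        · push_neg at hδ
          exact Or.inr hδ
      · exact Or.inl hsum
  -- final assembly
  have htail : Tendsto (fun m : ℕ => 1 / ((m:ℝ) * δ0 ^ 2)) atTop (nhds 0) := by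
    have h := tendsto_one_div_atTop_nhds_zero_nat (𝕜 := ℝ)
    have h2 := h.const_mul (1/δ0^2)
    rw [mul_zero] at h2
    refine h2.congr fun m => ?_
    rw [div_mul_div_comm, one_mul, mul_comm]
  filter_upwards [eventually_ge_atTop 2,
    htail.eventually (gt_mem_nhds (by linarith : (0:ℝ) < η/2))] with m hm2 hmtail
  have hm1 : 1 ≤ m := by omega
  have hmeasle : (Px.prod Pw) {p : Ωx × Ωw |
      |randVar X n m (fun i => w m i p.2) p.1 - sampleVar X n p.1| > ε}
      ≤ Px {ωx | (M:ℝ) < A ωx} + Pw (W m) := by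
    refine le_trans (measure_mono (hincl m hm1)) (le_trans (measure_union_le _ _) ?_)
    simp only [Measure.prod_prod, measure_univ, mul_one, one_mul]
    exact le_rfl
  have hfin1 : Px {ωx | (M:ℝ) < A ωx} ≠ ⊤ := measure_ne_top _ _
  have hfin2 : Pw (W m) ≠ ⊤ := measure_ne_top _ _
  have htoReal : ((Px.prod Pw) {p : Ωx × Ωw |
      |randVar X n m (fun i => w m i p.2) p.1 - sampleVar X n p.1| > ε}).toReal
      ≤ (Px {ωx | (M:ℝ) < A ωx}).toReal + (Pw (W m)).toReal := by
    refine le_trans (ENNReal.toReal_mono ?_ hmeasle) ?_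
    · exact ENNReal.add_ne_top.mpr ⟨hfin1, hfin2⟩
    · rw [ENNReal.toReal_add hfin1 hfin2]
  rw [Real.norm_eq_abs, abs_of_nonneg ENNReal.toReal_nonneg]
  calc ((Px.prod Pw) {p : Ωx × Ωw |
      |randVar X n m (fun i => w m i p.2) p.1 - sampleVar X n p.1| > ε}).toReal
      ≤ (Px {ωx | (M:ℝ) < A ωx}).toReal + (Pw (W m)).toReal := htoReal
    _ < η/2 + η/2 := by
        have := hWbound m hm2
        exact add_lt_add_of_lt_of_le (by exact hM) (le_trans this hmtail.le)
    _ = η := by ring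
end DetBound
end

section
/- Let X, X_1, X_2, ... be i.i.d. real-valued random variables with mean μ and variance σ², 0 < σ² < +∞. If n, m_n → +∞ in such a way that n = o(m_n), then S²_{m_n,n} − S_n² → 0 in probability-P_{X,w}; that is, for every ε > 0, P_{X,w}( |S²_{m_n,n} − S_n²| > ε ) → 0 as n → ∞. -/
open MeasureTheory ProbabilityTheory Filter

namespace RVAux
open Finset


/-- The support of the multinomial distribution. -/
def Sset (n m : ℕ) : Finset (Fin n → ℕ) :=
  (Fintype.piFinset fun _ => Finset.range (m+1)).filter (fun k => ∑ i, k i = m)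

lemma mem_Sset {n m : ℕ} {k : Fin n → ℕ} : k ∈ Sset n m ↔ ∑ i, k i = m := by
  simp only [Sset, mem_filter, Fintype.mem_piFinset, mem_range, and_iff_right_iff_imp]
  intro h i
  have : k i ≤ ∑ j, k j := Finset.single_le_sum (fun j _ => Nat.zero_le _) (mem_univ i)
  omega

lemma mult_update (n : ℕ) (j : Fin n) (k : Fin n → ℕ) :
    (k j + 1) * Nat.multinomial univ (Function.update k j (k j + 1)) =
      (∑ i, k i + 1) * Nat.multinomial univ k := by
  have hP : 0 < ∏ i, (k i).factorial :=
    Finset.prod_pos fun i _ => Nat.factorial_pos _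
  apply Nat.eq_of_mul_eq_mul_left hP
  have hprod : ∏ i, (Function.update k j (k j + 1) i).factorial
      = (k j + 1) * ∏ i, (k i).factorial := by
    have : ∀ i, (Function.update k j (k j + 1) i).factorial
        = Function.update (fun i => (k i).factorial) j (k j + 1).factorial i := by
      intro i
      exact congrArg id (Function.apply_update (fun _ x => x.factorial) k j (k j + 1) i)
    rw [Finset.prod_congr rfl fun i _ => this i]
    rw [Finset.prod_update_of_mem (mem_univ j), Finset.sdiff_singleton_eq_erase]
    rw [Nat.factorial_succ]
    rw [mul_assoc, ← Finset.mul_prod_erase univ (fun i => (k i).factorial) (mem_univ j)]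
  have hsum : ∑ i, Function.update k j (k j + 1) i = (∑ i, k i) + 1 := by
    have : ∀ i, Function.update k j (k j + 1) i
        = Function.update (fun i => k i) j (k j + 1) i := fun i => rfl
    rw [Finset.sum_update_of_mem (mem_univ j), Finset.sdiff_singleton_eq_erase]
    rw [← Finset.add_sum_erase univ k (mem_univ j)]
    omega
  calc (∏ i, (k i).factorial) * ((k j + 1) * Nat.multinomial univ (Function.update k j (k j + 1)))
      = (∏ i, (Function.update k j (k j + 1) i).factorial) *
          Nat.multinomial univ (Function.update k j (k j + 1)) := by rw [hprod]; ring
    _ = (∑ i, Function.update k j (k j + 1) i).factorial := Nat.multinomial_spec _ _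
    _ = ((∑ i, k i) + 1).factorial := by rw [hsum]
    _ = ((∑ i, k i) + 1) * (∑ i, k i).factorial := Nat.factorial_succ _
    _ = ((∑ i, k i) + 1) * ((∏ i, (k i).factorial) * Nat.multinomial univ k) := by
        rw [Nat.multinomial_spec]
    _ = (∏ i, (k i).factorial) * ((∑ i, k i + 1) * Nat.multinomial univ k) := by ring

lemma shift (n m : ℕ) (j : Fin n) (f : (Fin n → ℕ) → ℝ) :
    ∑ k ∈ Sset n (m+1), (k j : ℝ) * (Nat.multinomial univ k : ℝ) * f k
      = (m+1) * ∑ k ∈ Sset n m,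
          (Nat.multinomial univ k : ℝ) * f (Function.update k j (k j + 1)) := by
  classical
  rw [← Finset.sum_filter_of_ne (p := fun k => k j ≠ 0)
    (fun k _ h => by intro h0; exact h (by simp [h0]))]
  rw [Finset.mul_sum]
  refine Finset.sum_bij' (fun k _ => Function.update k j (k j - 1))
    (fun k _ => Function.update k j (k j + 1)) ?_ ?_ ?_ ?_ ?_
  · intro k hk
    simp only [mem_filter, mem_Sset] at hk
    obtain ⟨hks, hkj⟩ := hk
    rw [mem_Sset]
    rw [Finset.sum_update_of_mem (mem_univ j), Finset.sdiff_singleton_eq_erase,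
      ← Finset.add_sum_erase univ k (mem_univ j)] at *
    omega
  · intro k hk
    rw [mem_Sset] at hk
    simp only [mem_filter, mem_Sset]
    constructor
    · rw [Finset.sum_update_of_mem (mem_univ j), Finset.sdiff_singleton_eq_erase,
        ← Finset.add_sum_erase univ k (mem_univ j)] at *
      omega
    · simp
  · intro k hk
    simp only [mem_filter] at hk
    rw [Function.update_idem]
    simp only [Function.update_self]
    rw [Nat.sub_add_cancel (Nat.one_le_iff_ne_zero.2 hk.2), Function.update_eq_self]
  · intro k hk
    rw [Function.update_idem]
    simp only [Function.update_self]
    rw [Nat.add_sub_cancel, Function.update_eq_self]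
  · intro k hk
    simp only [mem_filter, mem_Sset] at hk
    obtain ⟨hks, hkj⟩ := hk
    set k' := Function.update k j (k j - 1) with hk'
    have h1 : Function.update k' j (k' j + 1) = k := by
      rw [hk', Function.update_idem]
      simp only [Function.update_self]
      rw [Nat.sub_add_cancel (Nat.one_le_iff_ne_zero.2 hkj), Function.update_eq_self]
    have h2 : k' j + 1 = k j := by
      rw [hk']; simp only [Function.update_self]; omega
    have hmult : (k' j + 1) * Nat.multinomial univ (Function.update k' j (k' j + 1))
        = (∑ i, k' i + 1) * Nat.multinomial univ k' := mult_update n j k'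
    have hsum' : ∑ i, k' i = m := by
      have : k' ∈ Sset n m := by
        rw [mem_Sset]
        rw [hk', Finset.sum_update_of_mem (mem_univ j), Finset.sdiff_singleton_eq_erase]
        rw [← Finset.add_sum_erase univ k (mem_univ j)] at hks
        omega
      exact mem_Sset.1 this
    rw [h1, h2, hsum'] at hmult
    rw [h1]
    have : (k j : ℝ) * (Nat.multinomial univ k : ℝ) = (m+1) * (Nat.multinomial univ k' : ℝ) := by
      have := congrArg (fun x : ℕ => (x : ℝ)) hmult
      push_cast at this ⊢
      linarith [this]
    rw [show (k j : ℝ) * (Nat.multinomial univ k : ℝ) * f k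
        = ((k j : ℝ) * (Nat.multinomial univ k : ℝ)) * f k by ring, this]
    ring


lemma T_eq (n m : ℕ) :
    ∑ k ∈ Sset n m, (Nat.multinomial univ k : ℝ) = (n : ℝ) ^ m := by
  induction m with
  | zero =>
    have hS : Sset n 0 = {fun _ => 0} := by
      ext k
      rw [mem_Sset, Finset.mem_singleton]
      constructor
      · intro h
        funext i
        have : k i ≤ ∑ j, k j := Finset.single_le_sum (fun j _ => Nat.zero_le _) (mem_univ i)
        omega
      · intro h; subst h; simp
    rw [hS, Finset.sum_singleton]
    have : Nat.multinomial univ (fun _ : Fin n => 0) = 1 := by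
      have := Nat.multinomial_spec univ (fun _ : Fin n => 0)
      simpa using this
    simp [this]
  | succ m ih =>
    have key : ∀ j : Fin n, ∑ k ∈ Sset n (m+1), (k j : ℝ) * (Nat.multinomial univ k : ℝ)
        = (m+1) * (n:ℝ)^m := by
      intro j
      have := shift n m j (fun _ => 1)
      simpa [ih] using this
    have expand : ((m:ℝ)+1) * ∑ k ∈ Sset n (m+1), (Nat.multinomial univ k : ℝ)
        = ∑ j : Fin n, ∑ k ∈ Sset n (m+1), (k j : ℝ) * (Nat.multinomial univ k : ℝ) := by
      rw [Finset.sum_comm, Finset.mul_sum]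
      refine Finset.sum_congr rfl fun k hk => ?_
      rw [← Finset.sum_mul]
      have hksum := mem_Sset.1 hk
      have : ∑ j : Fin n, (k j : ℝ) = (m : ℝ) + 1 := by
        calc ∑ j : Fin n, (k j : ℝ) = ((∑ j, k j : ℕ) : ℝ) := by push_cast; rfl
          _ = (m : ℝ) + 1 := by rw [hksum]; push_cast; ring
      rw [this]
    have : ((m:ℝ)+1) * ∑ k ∈ Sset n (m+1), (Nat.multinomial univ k : ℝ)
        = ((m:ℝ)+1) * ((n:ℝ)^(m+1)) := by
      rw [expand]
      simp only [key]
      rw [Finset.sum_const, card_univ, Fintype.card_fin, nsmul_eq_mul]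
      ring
    have hm1 : ((m:ℝ)+1) ≠ 0 := by positivity
    exact mul_left_cancel₀ hm1 this

lemma moment1 (n m : ℕ) (j : Fin n) :
    ∑ k ∈ Sset n (m+1), (k j : ℝ) * (Nat.multinomial univ k : ℝ) = (m+1) * (n:ℝ)^m := by
  have := shift n m j (fun _ => 1)
  simpa [T_eq] using this

lemma moment2 (n m : ℕ) (i j : Fin n) :
    ∑ k ∈ Sset n (m+2), (k i : ℝ) * (k j : ℝ) * (Nat.multinomial univ k : ℝ)
      = (m+2) * (m+1) * (n:ℝ)^m + (if i = j then ((m:ℝ)+2) * (n:ℝ)^(m+1) else 0) := by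
  have hs := shift n (m+1) j (fun k => (k i : ℝ))
  have hrw : ∑ k ∈ Sset n (m+2), (k i : ℝ) * (k j : ℝ) * (Nat.multinomial univ k : ℝ)
      = ∑ k ∈ Sset n (m+2), (k j : ℝ) * (Nat.multinomial univ k : ℝ) * (k i : ℝ) := by
    refine Finset.sum_congr rfl fun k _ => by ring
  rw [hrw, hs]
  by_cases hij : i = j
  · subst hij
    simp only [Function.update_self, if_pos rfl]
    have h2 : ∑ k ∈ Sset n (m+1), (Nat.multinomial univ k : ℝ) * ((k i + 1 : ℕ) : ℝ)
        = ∑ k ∈ Sset n (m+1), ((k i : ℝ) * (Nat.multinomial univ k : ℝ)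
            + (Nat.multinomial univ k : ℝ)) := by
      refine Finset.sum_congr rfl fun k _ => by push_cast; ring
    rw [h2, Finset.sum_add_distrib, moment1, T_eq]
    push_cast
    ring
  · simp only [if_neg hij]
    have : ∀ k : Fin n → ℕ, ((Function.update k j (k j + 1)) i : ℝ) = (k i : ℝ) := by
      intro k
      rw [Function.update_of_ne (fun h => hij h) _ k]
    simp only [this]
    have : ∑ k ∈ Sset n (m+1), (Nat.multinomial univ k : ℝ) * (k i : ℝ)
        = ∑ k ∈ Sset n (m+1), (k i : ℝ) * (Nat.multinomial univ k : ℝ) := by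
      refine Finset.sum_congr rfl fun k _ => by ring
    rw [this, moment1]
    push_cast
    ring

/-- the multinomial probability of the atom `k`. -/
noncomputable def Pk (n m : ℕ) (k : Fin n → ℕ) : ℝ :=
  (Nat.factorial m : ℝ) / (∏ i, (Nat.factorial (k i) : ℝ)) * (1 / n) ^ m

lemma Pk_nonneg (n m : ℕ) (k : Fin n → ℕ) : 0 ≤ Pk n m k := by
  unfold Pk
  have h1 : (0:ℝ) ≤ (Nat.factorial m : ℝ) := Nat.cast_nonneg _
  have h2 : (0:ℝ) ≤ ∏ i, (Nat.factorial (k i) : ℝ) :=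
    Finset.prod_nonneg fun i _ => Nat.cast_nonneg _
  positivity

lemma Pk_eq {n m : ℕ} {k : Fin n → ℕ} (hk : k ∈ Sset n m) :
    Pk n m k = (Nat.multinomial univ k : ℝ) * (1 / n) ^ m := by
  unfold Pk
  congr 1
  have hspec := Nat.multinomial_spec univ k
  rw [mem_Sset.1 hk] at hspec
  have hP : (0:ℝ) < ∏ i, (Nat.factorial (k i) : ℝ) := by
    rw [show (∏ i, (Nat.factorial (k i) : ℝ)) = ((∏ i, Nat.factorial (k i) : ℕ) : ℝ) by push_cast; rfl]
    exact_mod_cast Finset.prod_pos fun i _ => Nat.factorial_pos _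
  rw [div_eq_iff (ne_of_gt hP)]
  rw [show (∏ i, (Nat.factorial (k i) : ℝ)) = ((∏ i, Nat.factorial (k i) : ℕ) : ℝ) by push_cast; rfl]
  rw [← Nat.cast_mul, mul_comm (Nat.multinomial univ k)]
  exact_mod_cast congrArg (fun x : ℕ => (x : ℝ)) hspec.symm

lemma Pk_sum (n m : ℕ) (hn : 0 < n) : ∑ k ∈ Sset n m, Pk n m k = 1 := by
  rw [Finset.sum_congr rfl fun k hk => Pk_eq hk, ← Finset.sum_mul, T_eq]
  have hn' : (n:ℝ) ≠ 0 := by positivity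
  rw [← mul_pow, mul_one_div_cancel hn', one_pow]

lemma cov_eq (n m : ℕ) (hn : 0 < n) (hm : 2 ≤ m) (i j : Fin n) :
    ∑ k ∈ Sset n m, Pk n m k * ((k i : ℝ)/m - 1/n) * ((k j : ℝ)/m - 1/n)
      = (if i = j then 1/((m:ℝ)*n) else 0) - 1/((m:ℝ)*n^2) := by
  obtain ⟨m', rfl⟩ : ∃ m', m = m' + 2 := ⟨m - 2, by omega⟩
  have hn' : (n:ℝ) ≠ 0 := by positivity
  have hm' : ((m':ℝ)+2) ≠ 0 := by positivity
  have expand : ∀ k ∈ Sset n (m'+2),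
      Pk n (m'+2) k * ((k i : ℝ)/(m'+2) - 1/n) * ((k j : ℝ)/(m'+2) - 1/n)
      = (1/n:ℝ)^(m'+2) * ( (k i:ℝ) * (k j:ℝ) * (Nat.multinomial univ k : ℝ) * (1/((m'+2)*(m'+2)))
          - (k i:ℝ) * (Nat.multinomial univ k : ℝ) * (1/((m'+2)*n))
          - (k j:ℝ) * (Nat.multinomial univ k : ℝ) * (1/((m'+2)*n))
          + (Nat.multinomial univ k : ℝ) * (1/(n*n)) ) := by
    intro k hk
    rw [Pk_eq hk]
    push_cast
    field_simp
    ring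
  push_cast
  rw [Finset.sum_congr rfl expand, ← Finset.mul_sum]
  have split : ∑ k ∈ Sset n (m'+2),
      ( (k i:ℝ) * (k j:ℝ) * (Nat.multinomial univ k : ℝ) * (1/(((m':ℝ)+2)*((m':ℝ)+2)))
          - (k i:ℝ) * (Nat.multinomial univ k : ℝ) * (1/(((m':ℝ)+2)*n))
          - (k j:ℝ) * (Nat.multinomial univ k : ℝ) * (1/(((m':ℝ)+2)*n))
          + (Nat.multinomial univ k : ℝ) * (1/((n:ℝ)*n)) )
      = (∑ k ∈ Sset n (m'+2), (k i:ℝ) * (k j:ℝ) * (Nat.multinomial univ k : ℝ)) * (1/(((m':ℝ)+2)*((m':ℝ)+2)))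
          - (∑ k ∈ Sset n (m'+2), (k i:ℝ) * (Nat.multinomial univ k : ℝ)) * (1/(((m':ℝ)+2)*n))
          - (∑ k ∈ Sset n (m'+2), (k j:ℝ) * (Nat.multinomial univ k : ℝ)) * (1/(((m':ℝ)+2)*n))
          + (∑ k ∈ Sset n (m'+2), (Nat.multinomial univ k : ℝ)) * (1/((n:ℝ)*n)) := by
    rw [Finset.sum_add_distrib, Finset.sum_sub_distrib, Finset.sum_sub_distrib,
      ← Finset.sum_mul, ← Finset.sum_mul, ← Finset.sum_mul, ← Finset.sum_mul]
  have e : m' + 1 + 1 = m' + 2 := by omega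
  have hM1i := moment1 n (m'+1) i
  have hM1j := moment1 n (m'+1) j
  rw [e] at hM1i hM1j
  rw [split, moment2 n m' i j, T_eq, hM1i, hM1j]
  by_cases hij : i = j
  · subst hij
    simp only [if_pos rfl]
    push_cast
    rw [one_div_pow]
    field_simp
    ring
  · simp only [if_neg hij]
    push_cast
    rw [one_div_pow]
    field_simp
    ring

lemma keyVar (n m : ℕ) (hn : 0 < n) (hm : 2 ≤ m) (c : Fin n → ℝ) :
    ∑ k ∈ Sset n m, Pk n m k * (∑ i, c i * ((k i : ℝ)/m - 1/n))^2
      ≤ 1/((m:ℝ)*n) * ∑ i, (c i)^2 := by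
  have expand : ∀ k : Fin n → ℕ,
      Pk n m k * (∑ i, c i * ((k i : ℝ)/m - 1/n))^2
      = ∑ i : Fin n, ∑ j : Fin n,
          (c i * c j) * (Pk n m k * ((k i : ℝ)/m - 1/n) * ((k j : ℝ)/m - 1/n)) := by
    intro k
    rw [sq, Finset.sum_mul_sum]
    rw [Finset.mul_sum]
    refine Finset.sum_congr rfl fun i _ => ?_
    rw [Finset.mul_sum]
    refine Finset.sum_congr rfl fun j _ => by ring
  rw [Finset.sum_congr rfl fun k _ => expand k]
  rw [Finset.sum_comm]
  have inner : ∀ i : Fin n, ∑ k ∈ Sset n m, ∑ j : Fin n,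
      (c i * c j) * (Pk n m k * ((k i : ℝ)/m - 1/n) * ((k j : ℝ)/m - 1/n))
      = ∑ j : Fin n, (c i * c j) *
        ((if i = j then 1/((m:ℝ)*n) else 0) - 1/((m:ℝ)*n^2)) := by
    intro i
    rw [Finset.sum_comm]
    refine Finset.sum_congr rfl fun j _ => ?_
    rw [← Finset.mul_sum, cov_eq n m hn hm i j]
  rw [Finset.sum_congr rfl fun i _ => inner i]
  have final : ∑ i : Fin n, ∑ j : Fin n, (c i * c j) *
      ((if i = j then 1/((m:ℝ)*n) else 0) - 1/((m:ℝ)*n^2))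
      = 1/((m:ℝ)*n) * ∑ i, (c i)^2 - 1/((m:ℝ)*n^2) * (∑ i, c i)^2 := by
    have : ∀ i : Fin n, ∑ j : Fin n, (c i * c j) *
        ((if i = j then 1/((m:ℝ)*n) else 0) - 1/((m:ℝ)*n^2))
        = (c i)^2 * (1/((m:ℝ)*n)) - (c i * ∑ j, c j) * (1/((m:ℝ)*n^2)) := by
      intro i
      rw [Finset.sum_congr rfl (fun j _ => mul_sub (c i * c j) _ _), Finset.sum_sub_distrib]
      congr 1
      · rw [Finset.sum_eq_single i]
        · simp [sq]
        · intro j _ hji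
          simp [Ne.symm hji]
        · intro h; exact absurd (mem_univ i) h
      · rw [← Finset.sum_mul, ← Finset.mul_sum]
    rw [Finset.sum_congr rfl fun i _ => this i, Finset.sum_sub_distrib,
      ← Finset.sum_mul, ← Finset.sum_mul, ← Finset.sum_mul, sq (∑ i, c i)]
    ring
  rw [final]
  have h1 : 0 ≤ 1/((m:ℝ)*n^2) * (∑ i, c i)^2 := by positivity
  linarith

lemma chebyshev (n m : ℕ) (δ : ℝ) (hδ : 0 < δ) (z : (Fin n → ℕ) → ℝ) :
    ∑ k ∈ (Sset n m).filter (fun k => δ < |z k|), Pk n m k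
      ≤ 1/δ^2 * ∑ k ∈ Sset n m, Pk n m k * (z k)^2 := by
  classical
  have step1 : ∑ k ∈ (Sset n m).filter (fun k => δ < |z k|), Pk n m k
      ≤ ∑ k ∈ (Sset n m).filter (fun k => δ < |z k|), Pk n m k * (z k)^2 / δ^2 := by
    refine Finset.sum_le_sum fun k hk => ?_
    have hzk : δ < |z k| := (Finset.mem_filter.1 hk).2
    have h1 : δ^2 ≤ (z k)^2 := by
      have := sq_abs (z k)
      nlinarith [abs_nonneg (z k)]
    have hp := Pk_nonneg n m k
    have hδ2 : (0:ℝ) < δ^2 := by positivity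
    rw [le_div_iff₀ hδ2]
    calc Pk n m k * δ^2 ≤ Pk n m k * (z k)^2 := mul_le_mul_of_nonneg_left h1 hp
      _ = Pk n m k * (z k)^2 := rfl
  have step2 : ∑ k ∈ (Sset n m).filter (fun k => δ < |z k|), Pk n m k * (z k)^2 / δ^2
      ≤ ∑ k ∈ Sset n m, Pk n m k * (z k)^2 / δ^2 := by
    refine Finset.sum_le_sum_of_subset_of_nonneg (Finset.filter_subset _ _) fun k _ _ => ?_
    have := Pk_nonneg n m k
    positivity
  calc ∑ k ∈ (Sset n m).filter (fun k => δ < |z k|), Pk n m k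
      ≤ ∑ k ∈ Sset n m, Pk n m k * (z k)^2 / δ^2 := le_trans step1 step2
    _ = 1/δ^2 * ∑ k ∈ Sset n m, Pk n m k * (z k)^2 := by
        rw [Finset.mul_sum]
        exact Finset.sum_congr rfl fun k _ => by ring


variable {Ωw : Type} [MeasurableSpace Ωw]


def atom {n : ℕ} (w : Fin n → Ωw → ℕ) (k : Fin n → ℕ) : Set Ωw := {ω | ∀ i, w i ω = k i}

lemma atom_measurable {n : ℕ} {w : Fin n → Ωw → ℕ} (hw : ∀ i, Measurable (w i))
    (k : Fin n → ℕ) : MeasurableSet (atom w k) := by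
  have : atom w k = ⋂ i, (w i) ⁻¹' {k i} := by
    ext ω; simp [atom, Set.mem_iInter]
  rw [this]
  exact MeasurableSet.iInter fun i => (hw i) (measurableSet_singleton _)

lemma atom_disjoint {n : ℕ} {w : Fin n → Ωw → ℕ} {k k' : Fin n → ℕ} (h : k ≠ k') :
    Disjoint (atom w k) (atom w k') := by
  rw [Set.disjoint_left]
  intro ω h1 h2
  exact h (funext fun i => (h1 i).symm.trans (h2 i))

lemma measure_event (Pw : Measure Ωw) [IsProbabilityMeasure Pw] {n m : ℕ}
    {w : Fin n → Ωw → ℕ} (hw : IsUnifMultinomial Pw n m w)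
    (pred : (Fin n → ℕ) → Prop) [DecidablePred pred] :
    Pw {ω | pred (fun i => w i ω)} =
      ∑ k ∈ (Sset n m).filter pred, ENNReal.ofReal (Pk n m k) := by
  classical
  have hPA : ∀ k : Fin n → ℕ, Pw (atom w k) =
      ENNReal.ofReal (if ∑ i, k i = m then
        (Nat.factorial m : ℝ) / (∏ i, (Nat.factorial (k i) : ℝ)) * (1 / n) ^ m else 0) := by
    intro k
    rw [← hw.2 k]
    exact (ENNReal.ofReal_toReal (measure_ne_top Pw _)).symm
  have hPAS : ∀ k ∈ Sset n m, Pw (atom w k) = ENNReal.ofReal (Pk n m k) := by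
    intro k hk
    rw [hPA k, if_pos (mem_Sset.1 hk)]
    rfl
  have hPA0 : ∀ k : Fin n → ℕ, ¬ (∑ i, k i = m) → Pw (atom w k) = 0 := by
    intro k hk
    rw [hPA k, if_neg hk, ENNReal.ofReal_zero]
  have hsub2 : (⋃ k ∈ (Sset n m).filter pred, atom w k) ⊆ {ω | pred (fun i => w i ω)} := by
    intro ω hω
    rw [Set.mem_iUnion₂] at hω
    obtain ⟨k, hk, hωk⟩ := hω
    have : (fun i => w i ω) = k := funext fun i => hωk i
    simpa [this] using (Finset.mem_filter.1 hk).2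
  have hge : ∑ k ∈ (Sset n m).filter pred, Pw (atom w k) ≤ Pw {ω | pred (fun i => w i ω)} := by
    rw [← measure_biUnion_finset ?_ (fun k _ => atom_measurable hw.1 k)]
    · exact measure_mono hsub2
    · intro k hk k' hk' hne
      exact atom_disjoint hne
  have hle : Pw {ω | pred (fun i => w i ω)} ≤ ∑ k ∈ (Sset n m).filter pred, Pw (atom w k) := by
    have hsub1 : {ω | pred (fun i => w i ω)} ⊆
        (⋃ k ∈ (Sset n m).filter pred, atom w k) ∪
        (⋃ k : {k : Fin n → ℕ // ¬ (∑ i, k i = m)}, atom w (k : Fin n → ℕ)) := by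
      intro ω hω
      by_cases h : ∑ i, (fun i => w i ω) i = m
      · left
        rw [Set.mem_iUnion₂]
        refine ⟨fun i => w i ω, Finset.mem_filter.2 ⟨mem_Sset.2 h, hω⟩, fun i => rfl⟩
      · right
        exact Set.mem_iUnion.2 ⟨⟨fun i => w i ω, h⟩, fun i => rfl⟩
    calc Pw {ω | pred (fun i => w i ω)}
        ≤ Pw (⋃ k ∈ (Sset n m).filter pred, atom w k) +
          Pw (⋃ k : {k : Fin n → ℕ // ¬ (∑ i, k i = m)}, atom w (k : Fin n → ℕ)) :=
          (measure_mono hsub1).trans (measure_union_le _ _)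
      _ = Pw (⋃ k ∈ (Sset n m).filter pred, atom w k) := by
          rw [measure_iUnion_null fun k => hPA0 _ k.2, add_zero]
      _ ≤ ∑ k ∈ (Sset n m).filter pred, Pw (atom w k) := measure_biUnion_finset_le _ _
  have := le_antisymm hle hge
  rw [this]
  exact Finset.sum_congr rfl fun k hk => hPAS k (Finset.mem_filter.1 hk).1


end RVAux
namespace RVAux
open Finset


lemma identity {Ωx : Type} (X : ℕ → Ωx → ℝ) (n m : ℕ) (hn : 0 < n) (hm : 0 < m)
    (k : Fin n → ℕ) (hk : ∑ i, k i = m) (ωx : Ωx) :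
    randVar X n m k ωx - sampleVar X n ωx =
      (∑ i : Fin n, (X i ωx)^2 * ((k i : ℝ)/m - 1/n))
      - (∑ i : Fin n, X i ωx * ((k i : ℝ)/m - 1/n))^2
      - 2 * sampleMean X n ωx * (∑ i : Fin n, X i ωx * ((k i : ℝ)/m - 1/n)) := by
  have hn' : (n:ℝ) ≠ 0 := Nat.cast_ne_zero.2 hn.ne'
  have hm' : (m:ℝ) ≠ 0 := Nat.cast_ne_zero.2 hm.ne'
  set s1 : ℝ := ∑ i : Fin n, X i ωx with hs1
  set s2 : ℝ := ∑ i : Fin n, (X i ωx)^2 with hs2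
  set t1 : ℝ := ∑ i : Fin n, (k i : ℝ) * X i ωx with ht1
  set t2 : ℝ := ∑ i : Fin n, (k i : ℝ) * (X i ωx)^2 with ht2
  have hksum : ∑ i : Fin n, (k i : ℝ) = (m : ℝ) := by
    calc ∑ i : Fin n, (k i : ℝ) = ((∑ i, k i : ℕ) : ℝ) := by push_cast; rfl
      _ = (m : ℝ) := by rw [hk]
  have hRV : randVar X n m k ωx = (t2 - 2*(t1/m)*t1 + (t1/m)^2 * m)/m := by
    rw [randVar]
    congr 1
    have hRM : randMean X n m k ωx = t1/m := rfl
    have : ∀ i : Fin n, (k i : ℝ) * (X i ωx - randMean X n m k ωx)^2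
        = (k i : ℝ) * (X i ωx)^2 - (2*(t1/m))*((k i : ℝ)*X i ωx) + ((t1/m)^2)*(k i : ℝ) := by
      intro i; rw [hRM]; ring
    rw [Finset.sum_congr rfl fun i _ => this i, Finset.sum_add_distrib, Finset.sum_sub_distrib,
      ← Finset.mul_sum, ← Finset.mul_sum, ← ht1, ← ht2, hksum]
  have hSV : sampleVar X n ωx = (s2 - 2*(s1/n)*s1 + (s1/n)^2 * n)/n := by
    rw [sampleVar]
    congr 1
    have hSM : sampleMean X n ωx = s1/n := rfl
    have : ∀ i : Fin n, (X i ωx - sampleMean X n ωx)^2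
        = (X i ωx)^2 - (2*(s1/n))*(X i ωx) + ((s1/n)^2)*1 := by
      intro i; rw [hSM]; ring
    rw [Finset.sum_congr rfl fun i _ => this i, Finset.sum_add_distrib, Finset.sum_sub_distrib,
      ← Finset.mul_sum, ← Finset.mul_sum, ← hs1, ← hs2]
    simp [Finset.card_univ]
  have hz2 : ∑ i : Fin n, (X i ωx)^2 * ((k i : ℝ)/m - 1/n) = t2 * (1/m) - s2 * (1/n) := by
    have : ∀ i : Fin n, (X i ωx)^2 * ((k i : ℝ)/m - 1/n)
        = ((k i : ℝ) * (X i ωx)^2) * (1/m) - ((X i ωx)^2) * (1/n) := by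
      intro i; ring
    rw [Finset.sum_congr rfl fun i _ => this i, Finset.sum_sub_distrib,
      ← Finset.sum_mul, ← Finset.sum_mul, ← ht2, ← hs2]
  have hz1 : ∑ i : Fin n, X i ωx * ((k i : ℝ)/m - 1/n) = t1 * (1/m) - s1 * (1/n) := by
    have : ∀ i : Fin n, X i ωx * ((k i : ℝ)/m - 1/n)
        = ((k i : ℝ) * X i ωx) * (1/m) - (X i ωx) * (1/n) := by
      intro i; ring
    rw [Finset.sum_congr rfl fun i _ => this i, Finset.sum_sub_distrib,
      ← Finset.sum_mul, ← Finset.sum_mul, ← ht1, ← hs1]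
  have hSM : sampleMean X n ωx = s1/n := rfl
  rw [hRV, hSV, hz2, hz1, hSM]
  field_simp
  ring

lemma measD {Ωx Ωw : Type} [MeasurableSpace Ωx] [MeasurableSpace Ωw]
    (X : ℕ → Ωx → ℝ) (hX : ∀ i, Measurable (X i))
    (n m : ℕ) (w : Fin n → Ωw → ℕ) (hw : ∀ i, Measurable (w i)) :
    Measurable (fun p : Ωx × Ωw => randVar X n m (fun i => w i p.2) p.1 - sampleVar X n p.1) := by
  have hXm : ∀ i : Fin n, Measurable fun p : Ωx × Ωw => X i p.1 :=
    fun i => (hX i).comp measurable_fst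
  have hwm : ∀ i : Fin n, Measurable fun p : Ωx × Ωw => (w i p.2 : ℝ) :=
    fun i => measurable_from_top.comp ((hw i).comp measurable_snd)
  unfold randVar sampleVar randMean sampleMean
  apply Measurable.sub
  · apply Measurable.div_const
    apply Finset.measurable_sum
    intro i _
    apply Measurable.mul (hwm i)
    apply Measurable.pow_const
    apply Measurable.sub (hXm i)
    apply Measurable.div_const
    exact Finset.measurable_sum _ fun j _ => (hwm j).mul (hXm j)
  · apply Measurable.div_const
    apply Finset.measurable_sum
    intro i _
    apply Measurable.pow_const
    apply Measurable.sub (hXm i)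
    apply Measurable.div_const
    exact Finset.measurable_sum _ fun j _ => hXm j


/-- The bad event. -/
def Eset {Ωx Ωw : Type} (X : ℕ → Ωx → ℝ) (w : (n : ℕ) → Fin n → Ωw → ℕ)
    (m : ℕ → ℕ) (ε : ℝ) (n : ℕ) : Set (Ωx × Ωw) :=
  {p | |randVar X n (m n) (fun i => w n i p.2) p.1 - sampleVar X n p.1| > ε}

end RVAux
open Topology in
set_option maxHeartbeats 2000000 in
theorem randVar_consistency
    {Ωx Ωw : Type} [MeasurableSpace Ωx] [MeasurableSpace Ωw]
    (Px : Measure Ωx) (Pw : Measure Ωw)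
    [IsProbabilityMeasure Px] [IsProbabilityMeasure Pw]
    (X : ℕ → Ωx → ℝ)
    (hXmeas : ∀ i, Measurable (X i))
    (hXindep : iIndepFun X Px)
    (hXid : ∀ i, IdentDistrib (X i) (X 0) Px Px)
    (μ σ2 : ℝ)
    (hXint : Integrable (X 0) Px)
    (hμ : μ = ∫ ω, X 0 ω ∂Px)
    (hVarInt : Integrable (fun ω => (X 0 ω - μ) ^ 2) Px)
    (hσ2 : σ2 = ∫ ω, (X 0 ω - μ) ^ 2 ∂Px)
    (hσ2pos : 0 < σ2)
    (m : ℕ → ℕ) (w : (n : ℕ) → Fin n → Ωw → ℕ)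
    (hw : ∀ n, IsUnifMultinomial Pw n (m n) (w n))
    (hm : Tendsto m atTop atTop)
    (hnm : Tendsto (fun (n : ℕ) => (n : ℝ) / (m n : ℝ)) atTop (nhds 0))
    :
    ∀ ε : ℝ, 0 < ε →
      Tendsto (fun n => ((Px.prod Pw) {p |
          |randVar X n (m n) (fun i => w n i p.2) p.1 - sampleVar X n p.1| > ε}).toReal)
        atTop (nhds 0) := by
  intro ε hε
  classical
  have hwmeas : ∀ n, ∀ i : Fin n, Measurable (w n i) := fun n => (hw n).1
  show Tendsto (fun n => ((Px.prod Pw) (RVAux.Eset X w m ε n)).toReal) atTop (nhds 0)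
  have hEmeas : ∀ n, MeasurableSet (RVAux.Eset X w m ε n) := by
    intro n
    exact measurableSet_lt measurable_const (RVAux.measD X hXmeas n (m n) (w n) (hwmeas n)).abs
  have hXsqInt : Integrable (fun ω => (X 0 ω)^2) Px := by
    have h : (fun ω => (X 0 ω)^2) =
        fun ω => ((X 0 ω - μ)^2 + (2*μ) * X 0 ω + -(μ^2)) := by funext ω; ring
    rw [h]
    exact (hVarInt.add (hXint.const_mul (2*μ))).add (integrable_const _)
  have hpairwise : Pairwise (Function.onFun (IndepFun · · Px) X) := fun i j hij => hXindep.indepFun hij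
  have slln1 := ProbabilityTheory.strong_law_ae_real X hXint hpairwise hXid
  have hYindep : Pairwise (Function.onFun (IndepFun · · Px) (fun i ω => (X i ω)^2)) := by
    intro i j hij
    exact (hpairwise hij).comp (measurable_id.pow_const 2) (measurable_id.pow_const 2)
  have hYid : ∀ i, IdentDistrib (fun ω => (X i ω)^2) (fun ω => (X 0 ω)^2) Px Px :=
    fun i => (hXid i).comp (measurable_id.pow_const 2)
  have slln2' := ProbabilityTheory.strong_law_ae_real (fun i ω => (X i ω)^2) hXsqInt hYindep hYid
  have slln2 : ∀ᵐ ωx ∂Px, Tendsto (fun n : ℕ => (∑ i ∈ Finset.range n, (X i ωx)^2)/(n:ℝ))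
      atTop (𝓝 (∫ ω, (X 0 ω)^2 ∂Px)) := by
    simpa using slln2'
  have hm2 : ∀ᶠ n in atTop, 2 ≤ m n := hm.eventually_ge_atTop 2
  have hinvm : Tendsto (fun n : ℕ => 1/(m n : ℝ)) atTop (𝓝 0) := by
    have h1 : Tendsto (fun n : ℕ => (m n : ℝ)) atTop atTop :=
      tendsto_natCast_atTop_atTop.comp hm
    simp only [one_div]; exact h1.inv_tendsto_atTop
  set μ' : ℝ := ∫ ω, X 0 ω ∂Px with hμ'
  set L : ℝ := ∫ ω, (X 0 ω)^2 ∂Px with hLdef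
  -- pointwise convergence of slice measures
  have hpt : ∀ᵐ ωx ∂Px, Tendsto (fun n => Pw (Prod.mk ωx ⁻¹' RVAux.Eset X w m ε n))
      atTop (𝓝 0) := by
    filter_upwards [slln1, slln2] with ωx h1 h2
    have hBpos : (0:ℝ) < |μ'| + 1 := by positivity
    set B : ℝ := |μ'| + 1 with hBdef
    have hXBb : ∀ᶠ n in atTop, |sampleMean X n ωx| ≤ B := by
      have hmem : ∀ᶠ n : ℕ in atTop, (∑ i ∈ Finset.range n, X i ωx)/(n:ℝ) ∈ Set.Ioo (μ' - 1) (μ' + 1) :=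
        h1 (Ioo_mem_nhds (by linarith) (by linarith))
      filter_upwards [hmem] with n hn
      rw [Set.mem_Ioo] at hn
      have hsm : sampleMean X n ωx = (∑ i ∈ Finset.range n, X i ωx)/(n:ℝ) := by
        rw [sampleMean, Fin.sum_univ_eq_sum_range (fun j => X j ωx) n]
      rw [hsm, abs_le, hBdef]
      constructor
      · have := neg_abs_le μ'; linarith
      · have := le_abs_self μ'; linarith
    set δ₁ : ℝ := min (Real.sqrt (ε/3)) (ε/(6*(B+1))) with hδ₁def
    have hδ₁ : 0 < δ₁ := lt_min (Real.sqrt_pos.2 (by linarith)) (by positivity)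
    set A2 : ℕ → ℝ := fun n : ℕ => (∑ i ∈ Finset.range n, (X i ωx)^2)/(n:ℝ) with hA2def
    have h2' : Tendsto A2 atTop (𝓝 L) := h2
    have hA2nonneg : ∀ n, 0 ≤ A2 n := fun n =>
      div_nonneg (Finset.sum_nonneg fun i _ => sq_nonneg _) (Nat.cast_nonneg n)
    set bnd : ℕ → ℝ := fun n : ℕ => 9/ε^2 * ((n:ℝ)/(m n)) * (A2 n)^2 + 1/δ₁^2 * (1/(m n : ℝ)) * (A2 n)
      with hbnddef
    have hbnd0 : Tendsto bnd atTop (𝓝 0) := by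
      have t1 : Tendsto (fun n : ℕ => 9/ε^2 * ((n:ℝ)/(m n)) * (A2 n)^2)
          atTop (𝓝 (9/ε^2 * 0 * L^2)) :=
        (tendsto_const_nhds.mul hnm).mul (h2'.pow 2)
      have t2 : Tendsto (fun n : ℕ => 1/δ₁^2 * (1/(m n : ℝ)) * (A2 n))
          atTop (𝓝 (1/δ₁^2 * 0 * L)) :=
        (tendsto_const_nhds.mul hinvm).mul h2'
      have := t1.add t2
      rw [hbnddef]
      simpa using this
    have hkey : ∀ᶠ n in atTop,
        Pw (Prod.mk ωx ⁻¹' RVAux.Eset X w m ε n) ≤ ENNReal.ofReal (bnd n) := by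
      filter_upwards [hm2, hXBb, eventually_ge_atTop 1] with n hmn hXb hn1
      have hn0 : 0 < n := hn1
      have hm0 : 0 < m n := by omega
      have hnR : (0:ℝ) < n := by exact_mod_cast hn0
      have hmR : (0:ℝ) < m n := by exact_mod_cast hm0
      have hpre : Prod.mk ωx ⁻¹' RVAux.Eset X w m ε n =
          {ωw | (fun k : Fin n → ℕ =>
            ε < |randVar X n (m n) k ωx - sampleVar X n ωx|) (fun i => w n i ωw)} := rfl
      rw [hpre, RVAux.measure_event Pw (hw n)
        (fun k => ε < |randVar X n (m n) k ωx - sampleVar X n ωx|)]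
      rw [← ENNReal.ofReal_sum_of_nonneg (fun k _ => RVAux.Pk_nonneg n (m n) k)]
      apply ENNReal.ofReal_le_ofReal
      have hincl : (RVAux.Sset n (m n)).filter
            (fun k => ε < |randVar X n (m n) k ωx - sampleVar X n ωx|)
          ⊆ ((RVAux.Sset n (m n)).filter
              (fun k => ε/3 < |∑ i : Fin n, (X i ωx)^2 * ((k i : ℝ)/(m n) - 1/n)|)) ∪
            ((RVAux.Sset n (m n)).filter
              (fun k => δ₁ < |∑ i : Fin n, X i ωx * ((k i : ℝ)/(m n) - 1/n)|)) := by
        intro k hk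
        rw [Finset.mem_filter] at hk
        obtain ⟨hkS, hkP⟩ := hk
        rw [Finset.mem_union, Finset.mem_filter, Finset.mem_filter]
        by_contra hcon
        push_neg at hcon
        obtain ⟨hc2, hc1⟩ := hcon
        have h2a : |∑ i : Fin n, (X i ωx)^2 * ((k i : ℝ)/(m n) - 1/n)| ≤ ε/3 :=
          hc2 hkS
        have h1a : |∑ i : Fin n, X i ωx * ((k i : ℝ)/(m n) - 1/n)| ≤ δ₁ :=
          hc1 hkS
        set z1 := ∑ i : Fin n, X i ωx * ((k i : ℝ)/(m n) - 1/n) with hz1d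
        set z2 := ∑ i : Fin n, (X i ωx)^2 * ((k i : ℝ)/(m n) - 1/n) with hz2d
        have hid := RVAux.identity X n (m n) hn0 hm0 k (RVAux.mem_Sset.1 hkS) ωx
        have hsq : z1^2 ≤ ε/3 := by
          have hd1 : δ₁ ≤ Real.sqrt (ε/3) := min_le_left _ _
          have h0 : |z1| ≤ Real.sqrt (ε/3) := le_trans h1a hd1
          nlinarith [Real.sq_sqrt (by linarith : (0:ℝ) ≤ ε/3), sq_abs z1, abs_nonneg z1]
        have hlin : |2 * sampleMean X n ωx * z1| ≤ ε/3 := by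
          have hd2 : δ₁ ≤ ε/(6*(B+1)) := min_le_right _ _
          have h0 : |z1| ≤ ε/(6*(B+1)) := le_trans h1a hd2
          have hB1 : (0:ℝ) < B + 1 := by linarith
          have habs : (0:ℝ) ≤ |z1| := abs_nonneg _
          have step1 : 2 * |sampleMean X n ωx| * |z1| ≤ 2 * B * (ε/(6*(B+1))) := by
            apply mul_le_mul (by nlinarith [abs_nonneg (sampleMean X n ωx)]) h0 habs
              (by positivity)
          have step2 : 2 * B * (ε/(6*(B+1))) ≤ ε/3 := by
            have hq : 2*B*(ε/(6*(B+1))) = (2*B*ε)/(6*(B+1)) := by ring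
            rw [hq, div_le_div_iff₀ (by positivity) (by norm_num : (0:ℝ) < 3)]
            nlinarith [mul_pos hBpos hε]
          calc |2 * sampleMean X n ωx * z1| = 2 * |sampleMean X n ωx| * |z1| := by
                rw [abs_mul, abs_mul, abs_two]
            _ ≤ ε/3 := le_trans step1 step2
        have hDle : |randVar X n (m n) k ωx - sampleVar X n ωx| ≤ ε := by
          rw [hid]
          have e1 := abs_le.1 h2a
          have e2 := abs_le.1 hlin
          rw [abs_le]
          constructor <;> [nlinarith [sq_nonneg z1]; nlinarith [sq_nonneg z1]]
        linarith
      have hPknn : ∀ k ∈ ((RVAux.Sset n (m n)).filter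
              (fun k => ε/3 < |∑ i : Fin n, (X i ωx)^2 * ((k i : ℝ)/(m n) - 1/n)|)) ∪
            ((RVAux.Sset n (m n)).filter
              (fun k => δ₁ < |∑ i : Fin n, X i ωx * ((k i : ℝ)/(m n) - 1/n)|)),
          k ∉ (RVAux.Sset n (m n)).filter
            (fun k => ε < |randVar X n (m n) k ωx - sampleVar X n ωx|) →
          0 ≤ RVAux.Pk n (m n) k := fun k _ _ => RVAux.Pk_nonneg n (m n) k
      have hs2sum : ∑ i : Fin n, (X i ωx)^2 = (n:ℝ) * A2 n := by
        rw [hA2def]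
        rw [Fin.sum_univ_eq_sum_range (fun i => (X i ωx)^2) n]
        field_simp
      have h4 : ∑ i : Fin n, ((X i ωx)^2)^2 ≤ ((n:ℝ) * A2 n)^2 := by
        rw [← hs2sum]
        exact Finset.sum_sq_le_sq_sum_of_nonneg fun i _ => sq_nonneg _
      calc ∑ k ∈ (RVAux.Sset n (m n)).filter
              (fun k => ε < |randVar X n (m n) k ωx - sampleVar X n ωx|),
              RVAux.Pk n (m n) k
          ≤ ∑ k ∈ ((RVAux.Sset n (m n)).filter
              (fun k => ε/3 < |∑ i : Fin n, (X i ωx)^2 * ((k i : ℝ)/(m n) - 1/n)|)) ∪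
            ((RVAux.Sset n (m n)).filter
              (fun k => δ₁ < |∑ i : Fin n, X i ωx * ((k i : ℝ)/(m n) - 1/n)|)),
              RVAux.Pk n (m n) k :=
            Finset.sum_le_sum_of_subset_of_nonneg hincl hPknn
        _ ≤ (∑ k ∈ (RVAux.Sset n (m n)).filter
              (fun k => ε/3 < |∑ i : Fin n, (X i ωx)^2 * ((k i : ℝ)/(m n) - 1/n)|),
              RVAux.Pk n (m n) k)
            + (∑ k ∈ (RVAux.Sset n (m n)).filter
              (fun k => δ₁ < |∑ i : Fin n, X i ωx * ((k i : ℝ)/(m n) - 1/n)|),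
              RVAux.Pk n (m n) k) := by
            have hui := Finset.sum_union_inter
              (s₁ := (RVAux.Sset n (m n)).filter
                (fun k => ε/3 < |∑ i : Fin n, (X i ωx)^2 * ((k i : ℝ)/(m n) - 1/n)|))
              (s₂ := (RVAux.Sset n (m n)).filter
                (fun k => δ₁ < |∑ i : Fin n, X i ωx * ((k i : ℝ)/(m n) - 1/n)|))
              (f := RVAux.Pk n (m n))
            have h0 : 0 ≤ ∑ k ∈ ((RVAux.Sset n (m n)).filter
                (fun k => ε/3 < |∑ i : Fin n, (X i ωx)^2 * ((k i : ℝ)/(m n) - 1/n)|)) ∩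
              ((RVAux.Sset n (m n)).filter
                (fun k => δ₁ < |∑ i : Fin n, X i ωx * ((k i : ℝ)/(m n) - 1/n)|)),
                RVAux.Pk n (m n) k :=
              Finset.sum_nonneg fun k _ => RVAux.Pk_nonneg n (m n) k
            linarith
        _ ≤ 1/(ε/3)^2 * ∑ k ∈ RVAux.Sset n (m n), RVAux.Pk n (m n) k *
              (∑ i : Fin n, (X i ωx)^2 * ((k i : ℝ)/(m n) - 1/n))^2
            + 1/δ₁^2 * ∑ k ∈ RVAux.Sset n (m n), RVAux.Pk n (m n) k *
              (∑ i : Fin n, X i ωx * ((k i : ℝ)/(m n) - 1/n))^2 :=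
            add_le_add (RVAux.chebyshev n (m n) (ε/3) (by linarith) _)
              (RVAux.chebyshev n (m n) δ₁ hδ₁ _)
        _ ≤ 1/(ε/3)^2 * (1/((m n:ℝ)*n) * ∑ i : Fin n, ((X i ωx)^2)^2)
            + 1/δ₁^2 * (1/((m n:ℝ)*n) * ∑ i : Fin n, (X i ωx)^2) := by
            apply add_le_add
            · exact mul_le_mul_of_nonneg_left
                (RVAux.keyVar n (m n) hn0 hmn (fun i => (X i ωx)^2)) (by positivity)
            · exact mul_le_mul_of_nonneg_left
                (RVAux.keyVar n (m n) hn0 hmn (fun i => X i ωx)) (by positivity)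
        _ ≤ 1/(ε/3)^2 * (1/((m n:ℝ)*n) * ((n:ℝ) * A2 n)^2)
            + 1/δ₁^2 * (1/((m n:ℝ)*n) * ((n:ℝ) * A2 n)) := by
            apply add_le_add
            · exact mul_le_mul_of_nonneg_left
                (mul_le_mul_of_nonneg_left h4 (by positivity)) (by positivity)
            · exact le_of_eq (by rw [hs2sum])
        _ = bnd n := by
            rw [hbnddef]
            have hε' : (ε:ℝ) ≠ 0 := ne_of_gt hε
            have hδ' : δ₁ ≠ 0 := ne_of_gt hδ₁
            field_simp
            ring
    exact tendsto_of_tendsto_of_tendsto_of_le_of_le' tendsto_const_nhds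
      (by simpa using ENNReal.tendsto_ofReal hbnd0)
      (Eventually.of_forall fun n => zero_le) hkey
  have hprod : (fun n => (Px.prod Pw) (RVAux.Eset X w m ε n)) =
      fun n => ∫⁻ ωx, Pw (Prod.mk ωx ⁻¹' RVAux.Eset X w m ε n) ∂Px :=
    funext fun n => Measure.prod_apply (hEmeas n)
  have hlim : Tendsto (fun n => (Px.prod Pw) (RVAux.Eset X w m ε n)) atTop (𝓝 0) := by
    rw [hprod]
    have hdct := tendsto_lintegral_of_dominated_convergence (μ := Px)
      (F := fun n ωx => Pw (Prod.mk ωx ⁻¹' RVAux.Eset X w m ε n))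
      (f := fun _ => 0) (bound := fun _ => 1)
      (fun n => measurable_measure_prodMk_left (hEmeas n))
      (fun n => Filter.Eventually.of_forall fun ωx => prob_le_one)
      (by simp)
      hpt
    simpa using hdct
  have := (ENNReal.tendsto_toReal (a := 0) (by simp)).comp hlim
  exact this
end
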